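/- arXiv:1211.6151 — 5 statements merged into one kernel-verified Lean document; each statement's English description precedes it below -/
import Mathlib

section
/- Assume a satisfies the weakly degenerate (WD) hypothesis with degeneracy point x0 and constant K ∈ (0,1). Then the function 1/a is Lebesgue integrable on (0,1). -/
open MeasureTheory Set Filter

noncomputable section

/-- Absolute continuity of `f` on the interval `[a,b]`. -/
def ACOn (f : ℝ → ℝ) (a b : ℝ) : Prop :=
  ∀ ε > (0:ℝ), ∃ δ > (0:ℝ), ∀ n : ℕ, ∀ c d : Fin n → ℝ,
    (∀ i, a ≤ c i ∧ c i ≤ d i ∧ d i ≤ b) →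
    (∀ i j, i ≠ j → Set.Ioo (c i) (d i) ∩ Set.Ioo (c j) (d j) = ∅) →
    (∑ i, (d i - c i)) < δ → (∑ i, |f (d i) - f (c i)|) < ε

/-- Local absolute continuity on `[0, x0) ∪ (x0, 1]`, i.e. absolute continuity on every
compact subinterval of `[0,1]` avoiding `x0`. -/
def LocACOff (f : ℝ → ℝ) (x0 : ℝ) : Prop :=
  ∀ c d : ℝ, 0 ≤ c → c ≤ d → d ≤ 1 → x0 ∉ Set.Icc c d → ACOn f c d

/-- The weakly degenerate hypothesis (WD). -/
structure WeaklyDegenerate (a : ℝ → ℝ) (x0 K : ℝ) : Prop where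
  x0_mem : x0 ∈ Set.Ioo (0:ℝ) 1
  a_zero : a x0 = 0
  a_pos : ∀ x ∈ Set.Icc (0:ℝ) 1, x ≠ x0 → 0 < a x
  a_diff : ∀ x ∈ Set.Icc (0:ℝ) 1, x ≠ x0 → DifferentiableAt ℝ a x
  deriv_cont : ContinuousOn (deriv a) (Set.Icc 0 1 \ {x0})
  K_mem : K ∈ Set.Ioo (0:ℝ) 1
  ineq : ∀ x ∈ Set.Icc (0:ℝ) 1, x ≠ x0 → (x - x0) * deriv a x ≤ K * a x

/-- The strongly degenerate hypothesis (SD); membership in `W^{1,∞}(0,1)` is encoded as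
Lipschitz continuity on `[0,1]`. -/
structure StronglyDegenerate (a : ℝ → ℝ) (x0 K : ℝ) : Prop where
  x0_mem : x0 ∈ Set.Ioo (0:ℝ) 1
  a_zero : a x0 = 0
  a_pos : ∀ x ∈ Set.Icc (0:ℝ) 1, x ≠ x0 → 0 < a x
  a_diff : ∀ x ∈ Set.Icc (0:ℝ) 1, x ≠ x0 → DifferentiableAt ℝ a x
  deriv_cont : ContinuousOn (deriv a) (Set.Icc 0 1 \ {x0})
  lipschitz : ∃ L : NNReal, LipschitzOnWith L a (Set.Icc 0 1)
  K_mem : K ∈ Set.Ico (1:ℝ) 2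
  ineq : ∀ x ∈ Set.Icc (0:ℝ) 1, x ≠ x0 → (x - x0) * deriv a x ≤ K * a x

/-- Hypothesis 3.1: (WD) or (SD), together with the extra monotonicity assumption
on `a(x)/|x-x0|^θ` for some `θ ∈ (0, K]`. -/
def Hyp31 (a : ℝ → ℝ) (x0 K θ : ℝ) : Prop :=
  (WeaklyDegenerate a x0 K ∨ StronglyDegenerate a x0 K) ∧
  θ ∈ Set.Ioc (0:ℝ) K ∧
  AntitoneOn (fun x => a x / |x - x0| ^ θ) (Set.Ico 0 x0) ∧
  MonotoneOn (fun x => a x / |x - x0| ^ θ) (Set.Ioc x0 1)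

/-- Membership in the weighted space `H¹_a(0,1)`.  The flag `weak` records whether we are
in the weakly degenerate case, in which case global absolute continuity on `[0,1]` is
required; in the strongly degenerate case only local absolute continuity off `x0` holds. -/
def MemH1a (a : ℝ → ℝ) (x0 : ℝ) (weak : Prop) (u : ℝ → ℝ) : Prop :=
  (weak → ACOn u 0 1) ∧
  MemLp u 2 (volume.restrict (Set.Ioo (0:ℝ) 1)) ∧
  LocACOff u x0 ∧
  MemLp (fun x => Real.sqrt (a x) * deriv u x) 2 (volume.restrict (Set.Ioo (0:ℝ) 1)) ∧
  u 0 = 0 ∧ u 1 = 0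

/-- Membership in the weighted space `H²_a(0,1) = {u ∈ H¹_a : a u' ∈ H¹(0,1)}`. -/
def MemH2a (a : ℝ → ℝ) (x0 : ℝ) (weak : Prop) (u : ℝ → ℝ) : Prop :=
  MemH1a a x0 weak u ∧
  ACOn (fun x => a x * deriv u x) 0 1 ∧
  MemLp (fun x => a x * deriv u x) 2 (volume.restrict (Set.Ioo (0:ℝ) 1)) ∧
  MemLp (deriv (fun x => a x * deriv u x)) 2 (volume.restrict (Set.Ioo (0:ℝ) 1))

/-- The time weight `Θ(t) = [t(T-t)]^{-4}`. -/
def Theta (T t : ℝ) : ℝ := 1 / (t * (T - t)) ^ 4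

/-- The space weight `ψ(x) = c1 [∫_{x0}^x (y-x0)/a(y) dy - c2]`. -/
def psiC (a : ℝ → ℝ) (x0 c1 c2 : ℝ) (x : ℝ) : ℝ :=
  c1 * ((∫ y in x0..x, (y - x0) / a y) - c2)

/-- The Carleman weight `φ(t,x) = Θ(t) ψ(x)`. -/
def phiC (a : ℝ → ℝ) (x0 T c1 c2 : ℝ) (t x : ℝ) : ℝ :=
  Theta T t * psiC a x0 c1 c2 x

/-- Partial derivative in the first (time) variable. -/
def ptd (f : ℝ → ℝ → ℝ) : ℝ → ℝ → ℝ := fun t x => deriv (fun τ => f τ x) t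

/-- Partial derivative in the second (space) variable. -/
def pxd (f : ℝ → ℝ → ℝ) : ℝ → ℝ → ℝ := fun t x => deriv (fun y => f t y) x

/-- Membership in `V = L²(0,T;H²_a(0,1)) ∩ H¹(0,T;H¹_a(0,1))`. -/
def MemV (a : ℝ → ℝ) (x0 : ℝ) (weak : Prop) (T : ℝ) (v : ℝ → ℝ → ℝ) : Prop :=
  (∀ t ∈ Set.Ioo (0:ℝ) T, MemH2a a x0 weak (v t)) ∧
  (∀ x ∈ Set.Icc (0:ℝ) 1, ∀ t ∈ Set.Ioo (0:ℝ) T, DifferentiableAt ℝ (fun τ => v τ x) t) ∧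
  (∀ t ∈ Set.Ioo (0:ℝ) T, MemH1a a x0 weak (fun x => ptd v t x)) ∧
  (∀ x ∈ Set.Icc (0:ℝ) 1, ContinuousOn (fun τ => v τ x) (Set.Icc 0 T))

/-- The operator `L⁺_s w = (a w_x)_x - s φ_t w + s² a φ_x² w`. -/
def Lplus (a : ℝ → ℝ) (φ : ℝ → ℝ → ℝ) (s : ℝ) (w : ℝ → ℝ → ℝ) : ℝ → ℝ → ℝ :=
  fun t x => pxd (fun τ y => a y * pxd w τ y) t x
    - s * ptd φ t x * w t x + s ^ 2 * a x * (pxd φ t x) ^ 2 * w t x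

/-- The operator `L⁻_s w = w_t - 2 s a φ_x w_x - s (a φ_x)_x w`. -/
def Lminus (a : ℝ → ℝ) (φ : ℝ → ℝ → ℝ) (s : ℝ) (w : ℝ → ℝ → ℝ) : ℝ → ℝ → ℝ :=
  fun t x => ptd w t x - 2 * s * a x * pxd φ t x * pxd w t x
    - s * pxd (fun τ y => a y * pxd φ τ y) t x * w t x

/-- Membership in the class `W` of solutions of the homogeneous adjoint problem with
final datum in `D(A²)`; recall `W ⊂ C¹([0,T];H²_a(0,1))`. -/
def SolW (a : ℝ → ℝ) (x0 : ℝ) (weak : Prop) (T : ℝ) (v : ℝ → ℝ → ℝ) : Prop :=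
  (∀ t ∈ Set.Ioo (0:ℝ) T, ∀ x ∈ Set.Ioo (0:ℝ) 1,
    deriv (fun τ => v τ x) t + deriv (fun y => a y * deriv (fun z => v t z) y) x = 0) ∧
  (∀ t ∈ Set.Ioo (0:ℝ) T, v t 0 = 0 ∧ v t 1 = 0) ∧
  (∀ t ∈ Set.Icc (0:ℝ) T, MemH2a a x0 weak (v t)) ∧
  (∀ x ∈ Set.Icc (0:ℝ) 1, ∀ t ∈ Set.Icc (0:ℝ) T, DifferentiableAt ℝ (fun τ => v τ x) t) ∧
  (∀ t ∈ Set.Icc (0:ℝ) T, MemH2a a x0 weak (fun x => deriv (fun τ => v τ x) t)) ∧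
  MemH2a a x0 weak (fun x => deriv (fun y => a y * deriv (fun z => v T z) y) x)

/-- Lower bound on the right of `x0`: `a 1 * ((x - x0)/(1 - x0))^K ≤ a x` on `(x0, 1]`. -/
lemma wd_lower_right (a : ℝ → ℝ) (x0 K : ℝ) (ha : WeaklyDegenerate a x0 K) :
    ∀ x ∈ Set.Ioc x0 1, a 1 * ((x - x0) / (1 - x0)) ^ K ≤ a x := by
  obtain ⟨hx0l, hx0r⟩ := ha.x0_mem
  set F : ℝ → ℝ := fun x => Real.log (a x) - K * Real.log (x - x0) with hF
  have hmem : ∀ x ∈ Set.Ioc x0 1, x ∈ Set.Icc (0:ℝ) 1 ∧ x ≠ x0 := by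
    intro x hx
    exact ⟨⟨le_of_lt (lt_trans hx0l hx.1), hx.2⟩, ne_of_gt hx.1⟩
  have hderiv : ∀ x ∈ Set.Ioc x0 1,
      HasDerivAt F (deriv a x / a x - K * (1 / (x - x0))) x := by
    intro x hx
    obtain ⟨hxI, hxne⟩ := hmem x hx
    have hax : HasDerivAt a (deriv a x) x := (ha.a_diff x hxI hxne).hasDerivAt
    have hapos : 0 < a x := ha.a_pos x hxI hxne
    have h1 : HasDerivAt (fun y => Real.log (a y)) (deriv a x / a x) x :=
      hax.log (ne_of_gt hapos)
    have h2 : HasDerivAt (fun y : ℝ => y - x0) 1 x := (hasDerivAt_id x).sub_const x0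
    have h3 : HasDerivAt (fun y => Real.log (y - x0)) (1 / (x - x0)) x :=
      h2.log (by simpa using ne_of_gt (sub_pos.mpr hx.1))
    exact h1.sub (h3.const_mul K)
  have hanti : AntitoneOn F (Set.Ioc x0 1) := by
    apply antitoneOn_of_deriv_nonpos (convex_Ioc x0 1)
    · intro x hx
      exact ((hderiv x hx).continuousAt).continuousWithinAt
    · intro x hx
      rw [interior_Ioc] at hx
      exact ((hderiv x (Set.Ioo_subset_Ioc_self hx)).differentiableAt).differentiableWithinAt
    · intro x hx
      rw [interior_Ioc] at hx
      have hx' : x ∈ Set.Ioc x0 1 := Set.Ioo_subset_Ioc_self hx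
      rw [(hderiv x hx').deriv]
      obtain ⟨hxI, hxne⟩ := hmem x hx'
      have hapos : 0 < a x := ha.a_pos x hxI hxne
      have hsub : 0 < x - x0 := sub_pos.mpr hx.1
      have hin : (x - x0) * deriv a x ≤ K * a x := ha.ineq x hxI hxne
      rw [sub_nonpos, mul_one_div]
      rw [div_le_div_iff₀ hapos hsub]
      nlinarith
  intro x hx
  obtain ⟨hxI, hxne⟩ := hmem x hx
  have hapos : 0 < a x := ha.a_pos x hxI hxne
  have ha1 : 0 < a 1 := ha.a_pos 1 ⟨zero_le_one, le_refl 1⟩ (ne_of_gt hx0r)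
  have hsub : 0 < x - x0 := sub_pos.mpr hx.1
  have hsub1 : 0 < 1 - x0 := sub_pos.mpr hx0r
  have h1mem : (1:ℝ) ∈ Set.Ioc x0 1 := ⟨hx0r, le_refl 1⟩
  have key : F 1 ≤ F x := hanti hx h1mem hx.2
  have hq : 0 < (x - x0) / (1 - x0) := div_pos hsub hsub1
  have hrp : 0 < ((x - x0) / (1 - x0)) ^ K := Real.rpow_pos_of_pos hq K
  have hB : 0 < a 1 * ((x - x0) / (1 - x0)) ^ K := mul_pos ha1 hrp
  rw [← Real.log_le_log_iff hB hapos]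
  rw [Real.log_mul (ne_of_gt ha1) (ne_of_gt hrp), Real.log_rpow hq,
    Real.log_div (ne_of_gt hsub) (ne_of_gt hsub1)]
  have : Real.log (a 1) - K * Real.log (1 - x0) ≤ Real.log (a x) - K * Real.log (x - x0) :=
    key
  linarith [this]

/-- Lower bound on the left of `x0`: `a 0 * ((x0 - x)/x0)^K ≤ a x` on `[0, x0)`. -/
lemma wd_lower_left (a : ℝ → ℝ) (x0 K : ℝ) (ha : WeaklyDegenerate a x0 K) :
    ∀ x ∈ Set.Ico 0 x0, a 0 * ((x0 - x) / x0) ^ K ≤ a x := by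
  obtain ⟨hx0l, hx0r⟩ := ha.x0_mem
  set F : ℝ → ℝ := fun x => Real.log (a x) - K * Real.log (x0 - x) with hF
  have hmem : ∀ x ∈ Set.Ico (0:ℝ) x0, x ∈ Set.Icc (0:ℝ) 1 ∧ x ≠ x0 := by
    intro x hx
    exact ⟨⟨hx.1, le_of_lt (lt_of_lt_of_le hx.2 (le_of_lt hx0r))⟩, ne_of_lt hx.2⟩
  have hderiv : ∀ x ∈ Set.Ico (0:ℝ) x0,
      HasDerivAt F (deriv a x / a x - K * (-1 / (x0 - x))) x := by
    intro x hx
    obtain ⟨hxI, hxne⟩ := hmem x hx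
    have hax : HasDerivAt a (deriv a x) x := (ha.a_diff x hxI hxne).hasDerivAt
    have hapos : 0 < a x := ha.a_pos x hxI hxne
    have h1 : HasDerivAt (fun y => Real.log (a y)) (deriv a x / a x) x :=
      hax.log (ne_of_gt hapos)
    have h2 : HasDerivAt (fun y : ℝ => x0 - y) (-1) x := (hasDerivAt_id x).const_sub x0
    have h3 : HasDerivAt (fun y => Real.log (x0 - y)) (-1 / (x0 - x)) x :=
      h2.log (by simpa using ne_of_gt (sub_pos.mpr hx.2))
    exact h1.sub (h3.const_mul K)
  have hmono : MonotoneOn F (Set.Ico 0 x0) := by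
    apply monotoneOn_of_deriv_nonneg (convex_Ico 0 x0)
    · intro x hx
      exact ((hderiv x hx).continuousAt).continuousWithinAt
    · intro x hx
      rw [interior_Ico] at hx
      exact ((hderiv x (Set.Ioo_subset_Ico_self hx)).differentiableAt).differentiableWithinAt
    · intro x hx
      rw [interior_Ico] at hx
      have hx' : x ∈ Set.Ico (0:ℝ) x0 := Set.Ioo_subset_Ico_self hx
      rw [(hderiv x hx').deriv]
      obtain ⟨hxI, hxne⟩ := hmem x hx'
      have hapos : 0 < a x := ha.a_pos x hxI hxne
      have hsub : 0 < x0 - x := sub_pos.mpr hx.2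
      have hin : (x - x0) * deriv a x ≤ K * a x := ha.ineq x hxI hxne
      have : K * (-1 / (x0 - x)) = -(K / (x0 - x)) := by ring
      rw [this, sub_neg_eq_add]
      have h1 : -(K / (x0 - x)) ≤ deriv a x / a x := by
        rw [neg_le, ← neg_div, div_le_div_iff₀ hapos hsub]
        nlinarith
      linarith [h1, div_nonneg (le_of_lt (mul_pos ha.K_mem.1 (by linarith : (0:ℝ) < 1)))
        (le_of_lt hsub)]
  intro x hx
  obtain ⟨hxI, hxne⟩ := hmem x hx
  have hapos : 0 < a x := ha.a_pos x hxI hxne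
  have ha0 : 0 < a 0 := ha.a_pos 0 ⟨le_refl 0, zero_le_one⟩ (ne_of_lt hx0l)
  have hsub : 0 < x0 - x := sub_pos.mpr hx.2
  have h0mem : (0:ℝ) ∈ Set.Ico (0:ℝ) x0 := ⟨le_refl 0, hx0l⟩
  have key : F 0 ≤ F x := hmono h0mem hx hx.1
  have hq : 0 < (x0 - x) / x0 := div_pos hsub hx0l
  have hrp : 0 < ((x0 - x) / x0) ^ K := Real.rpow_pos_of_pos hq K
  have hB : 0 < a 0 * ((x0 - x) / x0) ^ K := mul_pos ha0 hrp
  rw [← Real.log_le_log_iff hB hapos]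
  rw [Real.log_mul (ne_of_gt ha0) (ne_of_gt hrp), Real.log_rpow hq,
    Real.log_div (ne_of_gt hsub) (ne_of_gt hx0l)]
  have : Real.log (a 0) - K * Real.log (x0 - 0) ≤ Real.log (a x) - K * Real.log (x0 - x) :=
    key
  rw [sub_zero] at this
  linarith [this]

/-- Lemma 2.1(2): in the weakly degenerate case, `1/a ∈ L¹(0,1)`. -/
theorem one_div_a_integrable_weak (a : ℝ → ℝ) (x0 K : ℝ)
    (ha : WeaklyDegenerate a x0 K) :
    MeasureTheory.IntegrableOn (fun x => 1 / a x) (Set.Ioo (0:ℝ) 1) := by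
  obtain ⟨hx0l, hx0r⟩ := ha.x0_mem
  obtain ⟨hKl, hKr⟩ := ha.K_mem
  have ha0 : 0 < a 0 := ha.a_pos 0 ⟨le_refl 0, zero_le_one⟩ (ne_of_lt hx0l)
  have ha1 : 0 < a 1 := ha.a_pos 1 ⟨zero_le_one, le_refl 1⟩ (ne_of_gt hx0r)
  have hsub1 : 0 < 1 - x0 := sub_pos.mpr hx0r
  set c : ℝ := min (a 0 / x0 ^ K) (a 1 / (1 - x0) ^ K) with hc
  have hcpos : 0 < c :=
    lt_min (div_pos ha0 (Real.rpow_pos_of_pos hx0l K))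
      (div_pos ha1 (Real.rpow_pos_of_pos hsub1 K))
  -- key lower bound
  have key : ∀ x ∈ Set.Ioo (0:ℝ) 1, x ≠ x0 → c * |x - x0| ^ K ≤ a x := by
    intro x hx hxne
    rcases lt_or_gt_of_ne hxne with hlt | hgt
    · have habs : |x - x0| = x0 - x := by
        rw [abs_of_nonpos (by linarith)]; ring
      have h1 := wd_lower_left a x0 K ha x ⟨le_of_lt hx.1, hlt⟩
      have h2 : c * |x - x0| ^ K ≤ a 0 * ((x0 - x) / x0) ^ K := by
        rw [habs, Real.div_rpow (by linarith) (le_of_lt hx0l)]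
        have := min_le_left (a 0 / x0 ^ K) (a 1 / (1 - x0) ^ K)
        have hrp : 0 ≤ (x0 - x) ^ K := Real.rpow_nonneg (by linarith) K
        calc c * (x0 - x) ^ K ≤ a 0 / x0 ^ K * (x0 - x) ^ K := by
              exact mul_le_mul_of_nonneg_right this hrp
          _ = a 0 * ((x0 - x) ^ K / x0 ^ K) := by ring
      linarith
    · have habs : |x - x0| = x - x0 := abs_of_nonneg (by linarith)
      have h1 := wd_lower_right a x0 K ha x ⟨hgt, le_of_lt hx.2⟩
      have h2 : c * |x - x0| ^ K ≤ a 1 * ((x - x0) / (1 - x0)) ^ K := by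
        rw [habs, Real.div_rpow (by linarith) (le_of_lt hsub1)]
        have := min_le_right (a 0 / x0 ^ K) (a 1 / (1 - x0) ^ K)
        have hrp : 0 ≤ (x - x0) ^ K := Real.rpow_nonneg (by linarith) K
        calc c * (x - x0) ^ K ≤ a 1 / (1 - x0) ^ K * (x - x0) ^ K := by
              exact mul_le_mul_of_nonneg_right this hrp
          _ = a 1 * ((x - x0) ^ K / (1 - x0) ^ K) := by ring
      linarith
  -- the dominating function is integrable
  have hdom : MeasureTheory.IntegrableOn (fun x => (1 / c) * |x - x0| ^ (-K))
      (Set.Ioo (0:ℝ) 1) := by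
    have hK1 : (-1:ℝ) < -K := by linarith
    have h1 : IntervalIntegrable (fun x : ℝ => x ^ (-K)) volume 0 (1 - x0) :=
      intervalIntegral.intervalIntegrable_rpow' hK1
    have h2 : IntervalIntegrable (fun x : ℝ => (x - x0) ^ (-K)) volume x0 1 := by
      simpa using h1.comp_sub_right x0
    have h1' : IntervalIntegrable (fun x : ℝ => x ^ (-K)) volume 0 x0 :=
      intervalIntegral.intervalIntegrable_rpow' hK1
    have h3 : IntervalIntegrable (fun x : ℝ => (x0 - x) ^ (-K)) volume 0 x0 := by
      have := h1'.comp_sub_left x0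
      rw [sub_zero, sub_self] at this
      exact this.symm
    have h2' : MeasureTheory.IntegrableOn (fun x : ℝ => (x - x0) ^ (-K))
        (Set.Ioc x0 1) := by
      rw [intervalIntegrable_iff_integrableOn_Ioc_of_le (le_of_lt hx0r)] at h2
      exact h2
    have h3' : MeasureTheory.IntegrableOn (fun x : ℝ => (x0 - x) ^ (-K))
        (Set.Ioc 0 x0) := by
      rw [intervalIntegrable_iff_integrableOn_Ioc_of_le (le_of_lt hx0l)] at h3
      exact h3
    have hR : MeasureTheory.IntegrableOn (fun x => (1 / c) * |x - x0| ^ (-K))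
        (Set.Ioc x0 1) := by
      apply MeasureTheory.Integrable.const_mul
      apply h2'.congr_fun _ measurableSet_Ioc
      intro x hx
      show (x - x0) ^ (-K) = |x - x0| ^ (-K)
      rw [abs_of_nonneg (by linarith [hx.1] : (0:ℝ) ≤ x - x0)]
    have hL : MeasureTheory.IntegrableOn (fun x => (1 / c) * |x - x0| ^ (-K))
        (Set.Ioc 0 x0) := by
      apply MeasureTheory.Integrable.const_mul
      apply h3'.congr_fun _ measurableSet_Ioc
      intro x hx
      show (x0 - x) ^ (-K) = |x - x0| ^ (-K)
      rw [abs_of_nonpos (by linarith [hx.2] : x - x0 ≤ 0), neg_sub]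
    have hU := hL.union hR
    apply hU.mono_set
    intro x hx
    rcases le_or_gt x x0 with h | h
    · exact Or.inl ⟨hx.1, h⟩
    · exact Or.inr ⟨h, le_of_lt hx.2⟩
  -- a.e. measurability
  have hmeas : MeasureTheory.AEStronglyMeasurable (fun x => 1 / a x)
      (volume.restrict (Set.Ioo (0:ℝ) 1)) := by
    have hcont : ContinuousOn (fun x => 1 / a x) (Set.Ioo (0:ℝ) 1 \ {x0}) := by
      intro x hx
      have hxI : x ∈ Set.Icc (0:ℝ) 1 := ⟨le_of_lt hx.1.1, le_of_lt hx.1.2⟩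
      have hxne : x ≠ x0 := hx.2
      have := (ha.a_diff x hxI hxne).continuousAt
      exact ((continuousAt_const.div this (ne_of_gt (ha.a_pos x hxI hxne)))).continuousWithinAt
    have hms : MeasurableSet (Set.Ioo (0:ℝ) 1 \ {x0}) :=
      measurableSet_Ioo.diff (measurableSet_singleton x0)
    have h1 : MeasureTheory.AEStronglyMeasurable (fun x => 1 / a x)
        (volume.restrict (Set.Ioo (0:ℝ) 1 \ {x0})) := hcont.aestronglyMeasurable hms
    have heq : volume.restrict (Set.Ioo (0:ℝ) 1 \ {x0}) =
        volume.restrict (Set.Ioo (0:ℝ) 1) := by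
      apply Measure.restrict_congr_set
      rw [diff_ae_eq_self]
      exact measure_mono_null Set.inter_subset_right (measure_singleton x0)
    rwa [heq] at h1
  -- conclude by comparison
  apply MeasureTheory.Integrable.mono' hdom hmeas
  have hne : ∀ᵐ x ∂(volume.restrict (Set.Ioo (0:ℝ) 1)), x ≠ x0 := by
    refine ae_iff.mpr ?_
    have h : {x : ℝ | ¬ x ≠ x0} = {x0} := by ext y; simp
    rw [h]
    exact le_antisymm ((Measure.restrict_le_self _).trans_eq (measure_singleton x0))
      zero_le
  filter_upwards [hne, MeasureTheory.ae_restrict_mem measurableSet_Ioo] with x hxne hx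
  have hapos : 0 < a x :=
    ha.a_pos x ⟨le_of_lt hx.1, le_of_lt hx.2⟩ hxne
  have habs : 0 < |x - x0| := abs_pos.mpr (sub_ne_zero.mpr hxne)
  have hrp : 0 < |x - x0| ^ K := Real.rpow_pos_of_pos habs K
  have hkey := key x hx hxne
  have h1 : ‖1 / a x‖ = 1 / a x := by
    rw [Real.norm_eq_abs, abs_of_pos (by positivity)]
  rw [h1]
  have h2 : (1:ℝ) / a x ≤ 1 / (c * |x - x0| ^ K) :=
    one_div_le_one_div_of_le (mul_pos hcpos hrp) hkey
  calc (1:ℝ) / a x ≤ 1 / (c * |x - x0| ^ K) := h2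
    _ = (1 / c) * |x - x0| ^ (-K) := by
        rw [Real.rpow_neg (le_of_lt habs)]
        field_simp
end
end

section
/- Assume a satisfies the strongly degenerate (SD) hypothesis with degeneracy point x0 and constant K ∈ [1,2). Then 1/√a is Lebesgue integrable on (0,1), while 1/a is not Lebesgue integrable on (0,1). -/
open MeasureTheory Set Filter

noncomputable section

private lemma integrableOn_comp_sub_iff (f : ℝ → ℝ) (c A B : ℝ) :
    MeasureTheory.IntegrableOn (fun x => f (x - c)) (Set.Ioo A B) ↔
      MeasureTheory.IntegrableOn f (Set.Ioo (A - c) (B - c)) := by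
  have hA : MeasurableEmbedding (fun x : ℝ => x + c) :=
    (Homeomorph.addRight c).isClosedEmbedding.measurableEmbedding
  have h := hA.integrableOn_map_iff (f := fun x => f (x - c)) (s := Set.Ioo A B)
    (μ := (volume : Measure ℝ))
  rw [map_add_right_eq_self volume c] at h
  rw [h]
  simp [Function.comp_def, Set.preimage_add_const_Ioo, IntegrableOn]

private lemma integrableOn_comp_neg_iff (f : ℝ → ℝ) (A B : ℝ) :
    MeasureTheory.IntegrableOn (fun x => f (-x)) (Set.Ioo A B) ↔
      MeasureTheory.IntegrableOn f (Set.Ioo (-B) (-A)) := by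
  have hN : MeasurableEmbedding (fun x : ℝ => -x) :=
    (Homeomorph.neg ℝ).isClosedEmbedding.measurableEmbedding
  have h := hN.integrableOn_map_iff (f := fun x => f (-x)) (s := Set.Ioo A B)
    (μ := (volume : Measure ℝ))
  have hmap : Measure.map (fun x : ℝ => -x) volume = volume :=
    Measure.map_neg_eq_self (volume : Measure ℝ)
  rw [hmap] at h
  have hpre : (fun x : ℝ => -x) ⁻¹' Set.Ioo A B = Set.Ioo (-B) (-A) := by
    ext x
    simp only [Set.mem_preimage, Set.mem_Ioo]
    constructor
    · rintro ⟨h1, h2⟩; exact ⟨by linarith, by linarith⟩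
    · rintro ⟨h1, h2⟩; exact ⟨by linarith, by linarith⟩
  rw [h, hpre]
  simp [Function.comp_def, IntegrableOn]

private lemma integrableOn_rpow_sub (c d s : ℝ) (hs : -1 < s) (hcd : c < d) :
    MeasureTheory.IntegrableOn (fun x => (x - c) ^ s) (Set.Ioo c d) := by
  rw [integrableOn_comp_sub_iff (fun t => t ^ s) c c d]
  simpa using (intervalIntegral.integrableOn_Ioo_rpow_iff (by linarith : (0:ℝ) < d - c)).2 hs

private lemma integrableOn_rpow_sub' (c e s : ℝ) (hs : -1 < s) (hec : e < c) :
    MeasureTheory.IntegrableOn (fun x => (c - x) ^ s) (Set.Ioo e c) := by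
  have h1 : MeasureTheory.IntegrableOn (fun t : ℝ => (t - (-c)) ^ s)
      (Set.Ioo (-c) (-e)) := integrableOn_rpow_sub (-c) (-e) s hs (by linarith)
  have h2 := (integrableOn_comp_neg_iff (fun t : ℝ => (t - (-c)) ^ s) e c).2
    (by simpa using h1)
  have : (fun x : ℝ => (-x - -c) ^ s) = fun x : ℝ => (c - x) ^ s := by
    funext x; rw [neg_sub_neg]
  rwa [this] at h2

private lemma not_integrableOn_inv_sub (c d : ℝ) (hcd : c < d) :
    ¬ MeasureTheory.IntegrableOn (fun x => (x - c)⁻¹) (Set.Ioo c d) := by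
  intro h
  rw [integrableOn_comp_sub_iff (fun t : ℝ => t⁻¹) c c d] at h
  simp only [sub_self] at h
  have h' : MeasureTheory.IntegrableOn (fun t : ℝ => t ^ (-1 : ℝ))
      (Set.Ioo (0:ℝ) (d - c)) := by
    apply h.congr_fun ?_ measurableSet_Ioo
    intro t ht
    show t⁻¹ = t ^ (-1 : ℝ)
    rw [Real.rpow_neg (le_of_lt ht.1), Real.rpow_one]
  rw [intervalIntegral.integrableOn_Ioo_rpow_iff (by linarith)] at h'
  linarith

private lemma sd_lower_right (a : ℝ → ℝ) (x0 K : ℝ) (ha : StronglyDegenerate a x0 K) :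
    ∀ x ∈ Set.Ioo x0 1, a 1 * (1 - x0) ^ (-K) * (x - x0) ^ K ≤ a x := by
  obtain ⟨hx0l, hx0r⟩ := ha.x0_mem
  obtain ⟨L, hLip⟩ := ha.lipschitz
  have hacont : ContinuousOn a (Set.Icc 0 1) := hLip.continuousOn
  have hsub : Set.Ioc x0 1 ⊆ Set.Icc (0:ℝ) 1 := fun y hy => ⟨le_of_lt (lt_of_le_of_lt hx0l.le hy.1), hy.2⟩
  set g : ℝ → ℝ := fun x => a x * (x - x0) ^ (-K) with hg
  have hganti : AntitoneOn g (Set.Ioc x0 1) := by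
    apply antitoneOn_of_deriv_nonpos (convex_Ioc x0 1)
    · apply ContinuousOn.mul (hacont.mono hsub)
      apply ContinuousOn.rpow_const (continuousOn_id.sub continuousOn_const)
      intro x hx
      exact Or.inl (ne_of_gt (sub_pos.2 hx.1))
    · rw [interior_Ioc]
      intro x hx
      have hxm : x ∈ Set.Icc (0:ℝ) 1 := ⟨le_of_lt (lt_trans hx0l hx.1), hx.2.le⟩
      have hax : HasDerivAt a (deriv a x) x :=
        (ha.a_diff x hxm (ne_of_gt hx.1)).hasDerivAt
      have hinner : HasDerivAt (fun y : ℝ => y - x0) 1 x := (hasDerivAt_id x).sub_const x0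
      have hpow : HasDerivAt (fun y : ℝ => (y - x0) ^ (-K))
          (1 * -K * (x - x0) ^ (-K - 1)) x :=
        hinner.rpow_const (p := -K) (Or.inl (ne_of_gt (sub_pos.2 hx.1)))
      exact ((hax.mul hpow).differentiableAt).differentiableWithinAt
    · rw [interior_Ioc]
      intro x hx
      have hxm : x ∈ Set.Icc (0:ℝ) 1 := ⟨le_of_lt (lt_trans hx0l hx.1), hx.2.le⟩
      have hpos : (0:ℝ) < x - x0 := sub_pos.2 hx.1
      have hax : HasDerivAt a (deriv a x) x :=
        (ha.a_diff x hxm (ne_of_gt hx.1)).hasDerivAt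
      have hinner : HasDerivAt (fun y : ℝ => y - x0) 1 x := (hasDerivAt_id x).sub_const x0
      have hpow : HasDerivAt (fun y : ℝ => (y - x0) ^ (-K))
          (1 * -K * (x - x0) ^ (-K - 1)) x :=
        hinner.rpow_const (p := -K) (Or.inl (ne_of_gt hpos))
      have hgd : HasDerivAt g
          (deriv a x * (x - x0) ^ (-K) + a x * (1 * -K * (x - x0) ^ (-K - 1))) x :=
        hax.mul hpow
      rw [hgd.deriv]
      have hkey := ha.ineq x hxm (ne_of_gt hx.1)
      have ht : (0:ℝ) < (x - x0) ^ (-K - 1) := Real.rpow_pos_of_pos hpos _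
      have hsplit : (x - x0) ^ (-K) = (x - x0) * (x - x0) ^ (-K - 1) := by
        have h := Real.rpow_add hpos 1 (-K - 1)
        rw [Real.rpow_one] at h
        rw [← h]
        congr 1
        ring
      rw [hsplit]
      have : deriv a x * ((x - x0) * (x - x0) ^ (-K - 1)) +
          a x * (1 * -K * (x - x0) ^ (-K - 1)) =
          (x - x0) ^ (-K - 1) * ((x - x0) * deriv a x - K * a x) := by ring
      rw [this]
      exact mul_nonpos_of_nonneg_of_nonpos ht.le (by linarith)
  intro x hx
  have hpos : (0:ℝ) < x - x0 := sub_pos.2 hx.1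
  have h1 : g 1 ≤ g x :=
    hganti ⟨hx.1, hx.2.le⟩ ⟨hx0r, le_refl 1⟩ hx.2.le
  have h2 := mul_le_mul_of_nonneg_right h1 (Real.rpow_nonneg hpos.le K)
  calc a 1 * (1 - x0) ^ (-K) * (x - x0) ^ K = g 1 * (x - x0) ^ K := rfl
    _ ≤ g x * (x - x0) ^ K := h2
    _ = a x * ((x - x0) ^ (-K) * (x - x0) ^ K) := by ring
    _ = a x := by
        rw [← Real.rpow_add hpos, neg_add_cancel, Real.rpow_zero, mul_one]

private lemma sd_lower_left (a : ℝ → ℝ) (x0 K : ℝ) (ha : StronglyDegenerate a x0 K) :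
    ∀ x ∈ Set.Ioo (0:ℝ) x0, a 0 * x0 ^ (-K) * (x0 - x) ^ K ≤ a x := by
  obtain ⟨hx0l, hx0r⟩ := ha.x0_mem
  obtain ⟨L, hLip⟩ := ha.lipschitz
  have hacont : ContinuousOn a (Set.Icc 0 1) := hLip.continuousOn
  have hsub : Set.Ico (0:ℝ) x0 ⊆ Set.Icc (0:ℝ) 1 := fun y hy => ⟨hy.1, le_of_lt (lt_of_lt_of_le hy.2 hx0r.le)⟩
  set g : ℝ → ℝ := fun x => a x * (x0 - x) ^ (-K) with hg
  have hgmono : MonotoneOn g (Set.Ico 0 x0) := by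
    apply monotoneOn_of_deriv_nonneg (convex_Ico 0 x0)
    · apply ContinuousOn.mul (hacont.mono hsub)
      apply ContinuousOn.rpow_const (continuousOn_const.sub continuousOn_id)
      intro x hx
      exact Or.inl (ne_of_gt (sub_pos.2 hx.2))
    · rw [interior_Ico]
      intro x hx
      have hxm : x ∈ Set.Icc (0:ℝ) 1 := ⟨hx.1.le, le_of_lt (lt_trans hx.2 hx0r)⟩
      have hax : HasDerivAt a (deriv a x) x :=
        (ha.a_diff x hxm (ne_of_lt hx.2)).hasDerivAt
      have hinner : HasDerivAt (fun y : ℝ => x0 - y) (-1) x := by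
        simpa using (hasDerivAt_id x).const_sub x0
      have hpow : HasDerivAt (fun y : ℝ => (x0 - y) ^ (-K))
          (-1 * -K * (x0 - x) ^ (-K - 1)) x :=
        hinner.rpow_const (p := -K) (Or.inl (ne_of_gt (sub_pos.2 hx.2)))
      exact ((hax.mul hpow).differentiableAt).differentiableWithinAt
    · rw [interior_Ico]
      intro x hx
      have hxm : x ∈ Set.Icc (0:ℝ) 1 := ⟨hx.1.le, le_of_lt (lt_trans hx.2 hx0r)⟩
      have hpos : (0:ℝ) < x0 - x := sub_pos.2 hx.2
      have hax : HasDerivAt a (deriv a x) x :=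
        (ha.a_diff x hxm (ne_of_lt hx.2)).hasDerivAt
      have hinner : HasDerivAt (fun y : ℝ => x0 - y) (-1) x := by
        simpa using (hasDerivAt_id x).const_sub x0
      have hpow : HasDerivAt (fun y : ℝ => (x0 - y) ^ (-K))
          (-1 * -K * (x0 - x) ^ (-K - 1)) x :=
        hinner.rpow_const (p := -K) (Or.inl (ne_of_gt hpos))
      have hgd : HasDerivAt g
          (deriv a x * (x0 - x) ^ (-K) + a x * (-1 * -K * (x0 - x) ^ (-K - 1))) x :=
        hax.mul hpow
      rw [hgd.deriv]
      have hkey := ha.ineq x hxm (ne_of_lt hx.2)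
      have ht : (0:ℝ) < (x0 - x) ^ (-K - 1) := Real.rpow_pos_of_pos hpos _
      have hsplit : (x0 - x) ^ (-K) = (x0 - x) * (x0 - x) ^ (-K - 1) := by
        have h := Real.rpow_add hpos 1 (-K - 1)
        rw [Real.rpow_one] at h
        rw [← h]
        congr 1
        ring
      rw [hsplit]
      have : deriv a x * ((x0 - x) * (x0 - x) ^ (-K - 1)) +
          a x * (-1 * -K * (x0 - x) ^ (-K - 1)) =
          (x0 - x) ^ (-K - 1) * ((x0 - x) * deriv a x + K * a x) := by ring
      rw [this]
      exact mul_nonneg ht.le (by nlinarith)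
  intro x hx
  have hpos : (0:ℝ) < x0 - x := sub_pos.2 hx.2
  have h1 : g 0 ≤ g x :=
    hgmono ⟨le_refl 0, hx0l⟩ ⟨hx.1.le, hx.2⟩ hx.1.le
  have h2 := mul_le_mul_of_nonneg_right h1 (Real.rpow_nonneg hpos.le K)
  calc a 0 * x0 ^ (-K) * (x0 - x) ^ K = g 0 * (x0 - x) ^ K := by
        simp only [hg, sub_zero]
    _ ≤ g x * (x0 - x) ^ K := h2
    _ = a x * ((x0 - x) ^ (-K) * (x0 - x) ^ K) := by ring
    _ = a x := by
        rw [← Real.rpow_add hpos, neg_add_cancel, Real.rpow_zero, mul_one]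

/-- Lemma 2.1(3): in the strongly degenerate case, `1/√a ∈ L¹(0,1)` while `1/a ∉ L¹(0,1)`. -/
theorem integrability_strong (a : ℝ → ℝ) (x0 K : ℝ)
    (ha : StronglyDegenerate a x0 K) :
    MeasureTheory.IntegrableOn (fun x => 1 / Real.sqrt (a x)) (Set.Ioo (0:ℝ) 1) ∧
    ¬ MeasureTheory.IntegrableOn (fun x => 1 / a x) (Set.Ioo (0:ℝ) 1) := by
  obtain ⟨hx0l, hx0r⟩ := ha.x0_mem
  obtain ⟨hK1, hK2⟩ := ha.K_mem
  obtain ⟨L, hLip⟩ := ha.lipschitz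
  have hacont : ContinuousOn a (Set.Icc 0 1) := hLip.continuousOn
  have hs : (-1 : ℝ) < -(K / 2) := by linarith
  -- positivity of the constants
  have ha1 : 0 < a 1 := ha.a_pos 1 ⟨by norm_num, le_refl 1⟩ (ne_of_gt hx0r)
  have ha0 : 0 < a 0 := ha.a_pos 0 ⟨le_refl 0, by norm_num⟩ (ne_of_lt hx0l)
  set c1 : ℝ := a 1 * (1 - x0) ^ (-K) with hc1
  set c0 : ℝ := a 0 * x0 ^ (-K) with hc0
  have hc1pos : 0 < c1 := mul_pos ha1 (Real.rpow_pos_of_pos (by linarith) _)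
  have hc0pos : 0 < c0 := mul_pos ha0 (Real.rpow_pos_of_pos hx0l _)
  -- continuity / measurability of 1/√a on subintervals
  have hmeas : ∀ A B : ℝ, Set.Ioo A B ⊆ Set.Icc 0 1 → x0 ∉ Set.Ioo A B →
      AEStronglyMeasurable (fun x => 1 / Real.sqrt (a x))
        (volume.restrict (Set.Ioo A B)) := by
    intro A B hAB hx0n
    apply ContinuousOn.aestronglyMeasurable _ measurableSet_Ioo
    apply ContinuousOn.div continuousOn_const
    · exact Real.continuous_sqrt.comp_continuousOn (hacont.mono hAB)
    · intro x hx
      exact ne_of_gt (Real.sqrt_pos.2 (ha.a_pos x (hAB hx)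
        (fun h => hx0n (h ▸ hx))))
  -- generic bound lemma: if c * t^K ≤ a x with t > 0 then 1/√(a x) ≤ (√c)⁻¹ * t^(-(K/2))
  have hbnd : ∀ (c t y : ℝ), 0 < c → 0 < t → c * t ^ K ≤ y →
      1 / Real.sqrt y ≤ (Real.sqrt c)⁻¹ * t ^ (-(K / 2)) := by
    intro c t y hc ht hy
    have hsc : 0 < Real.sqrt c := Real.sqrt_pos.2 hc
    have htK : Real.sqrt (t ^ K) = t ^ (K / 2) := by
      rw [Real.sqrt_eq_rpow, ← Real.rpow_mul ht.le]
      congr 1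
      ring
    have h1 : Real.sqrt c * t ^ (K / 2) ≤ Real.sqrt y := by
      have := Real.sqrt_le_sqrt hy
      rwa [Real.sqrt_mul hc.le, htK] at this
    have h2 : 0 < Real.sqrt c * t ^ (K / 2) :=
      mul_pos hsc (Real.rpow_pos_of_pos ht _)
    calc 1 / Real.sqrt y ≤ 1 / (Real.sqrt c * t ^ (K / 2)) :=
          one_div_le_one_div_of_le h2 h1
      _ = (Real.sqrt c)⁻¹ * t ^ (-(K / 2)) := by
          rw [Real.rpow_neg ht.le, one_div, mul_inv]
  constructor
  · -- integrability of 1/√a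
    have hright : MeasureTheory.IntegrableOn (fun x => 1 / Real.sqrt (a x))
        (Set.Ioo x0 1) := by
      apply Integrable.mono'
        ((integrableOn_rpow_sub x0 1 _ hs hx0r).const_mul (Real.sqrt c1)⁻¹)
        (hmeas x0 1 (fun y hy => ⟨le_of_lt (lt_trans hx0l hy.1), hy.2.le⟩)
          (fun h => lt_irrefl x0 h.1))
      rw [ae_restrict_iff' measurableSet_Ioo]
      filter_upwards with x hx
      have hpos : (0:ℝ) < x - x0 := sub_pos.2 hx.1
      have hge := sd_lower_right a x0 K ha x hx
      have hbx := hbnd c1 (x - x0) (a x) hc1pos hpos hge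
      have hnn : 0 ≤ 1 / Real.sqrt (a x) := by positivity
      rwa [Real.norm_eq_abs, abs_of_nonneg hnn]
    have hleft : MeasureTheory.IntegrableOn (fun x => 1 / Real.sqrt (a x))
        (Set.Ioo 0 x0) := by
      apply Integrable.mono'
        ((integrableOn_rpow_sub' x0 0 _ hs hx0l).const_mul (Real.sqrt c0)⁻¹)
        (hmeas 0 x0 (fun y hy => ⟨hy.1.le, le_of_lt (lt_trans hy.2 hx0r)⟩)
          (fun h => lt_irrefl x0 h.2))
      rw [ae_restrict_iff' measurableSet_Ioo]
      filter_upwards with x hx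
      have hpos : (0:ℝ) < x0 - x := sub_pos.2 hx.2
      have hge := sd_lower_left a x0 K ha x hx
      have hbx := hbnd c0 (x0 - x) (a x) hc0pos hpos hge
      have hnn : 0 ≤ 1 / Real.sqrt (a x) := by positivity
      rwa [Real.norm_eq_abs, abs_of_nonneg hnn]
    have hleft' : MeasureTheory.IntegrableOn (fun x => 1 / Real.sqrt (a x))
        (Set.Ioc 0 x0) := (integrableOn_Ioc_iff_integrableOn_Ioo (by simp)).2 hleft
    have hunion := hleft'.union hright
    apply hunion.mono_set
    intro x hx
    rcases le_or_gt x x0 with h | h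
    · exact Or.inl ⟨hx.1, h⟩
    · exact Or.inr ⟨h, hx.2⟩
  · -- non-integrability of 1/a
    intro hInt
    set M : ℝ := (L : ℝ) + 1 with hM
    have hMpos : 0 < M := by positivity
    have hub : ∀ x ∈ Set.Ioo x0 1, a x ≤ M * (x - x0) := by
      intro x hx
      have hxm : x ∈ Set.Icc (0:ℝ) 1 := ⟨le_of_lt (lt_trans hx0l hx.1), hx.2.le⟩
      have hx0m : x0 ∈ Set.Icc (0:ℝ) 1 := ⟨hx0l.le, hx0r.le⟩
      have hd := hLip.dist_le_mul x hxm x0 hx0m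
      rw [Real.dist_eq, Real.dist_eq, ha.a_zero, sub_zero] at hd
      have habs : |a x| = a x := abs_of_pos (ha.a_pos x hxm (ne_of_gt hx.1))
      have habs2 : |x - x0| = x - x0 := abs_of_pos (sub_pos.2 hx.1)
      rw [habs, habs2] at hd
      nlinarith [sub_pos.2 hx.1]
    have hr : MeasureTheory.IntegrableOn (fun x => 1 / a x) (Set.Ioo x0 1) :=
      hInt.mono_set (fun y hy => ⟨lt_trans hx0l hy.1, hy.2⟩)
    have hf2 : MeasureTheory.IntegrableOn (fun x => M⁻¹ * (x - x0)⁻¹)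
        (Set.Ioo x0 1) := by
      apply Integrable.mono hr
      · apply ContinuousOn.aestronglyMeasurable _ measurableSet_Ioo
        apply ContinuousOn.mul continuousOn_const
        apply ContinuousOn.inv₀ (continuousOn_id.sub continuousOn_const)
        intro x hx
        exact ne_of_gt (sub_pos.2 hx.1)
      · rw [ae_restrict_iff' measurableSet_Ioo]
        filter_upwards with x hx
        have hpos : (0:ℝ) < x - x0 := sub_pos.2 hx.1
        have hapos : 0 < a x := ha.a_pos x ⟨le_of_lt (lt_trans hx0l hx.1), hx.2.le⟩
          (ne_of_gt hx.1)
        have h1 : M⁻¹ * (x - x0)⁻¹ ≤ 1 / a x := by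
          rw [← one_div, ← one_div, div_mul_div_comm, one_mul]
          exact one_div_le_one_div_of_le hapos (hub x hx)
        have h2 : 0 ≤ M⁻¹ * (x - x0)⁻¹ := by positivity
        have h3 : 0 ≤ 1 / a x := by positivity
        rw [Real.norm_eq_abs, Real.norm_eq_abs, abs_of_nonneg h2, abs_of_nonneg h3]
        exact h1
    have hf3 : MeasureTheory.IntegrableOn (fun x => M * (M⁻¹ * (x - x0)⁻¹))
        (Set.Ioo x0 1) := hf2.const_mul M
    have heq : (fun x : ℝ => M * (M⁻¹ * (x - x0)⁻¹)) = fun x : ℝ => (x - x0)⁻¹ := by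
      funext x
      rw [← mul_assoc, mul_inv_cancel₀ (ne_of_gt hMpos), one_mul]
    rw [heq] at hf3
    exact not_integrableOn_inv_sub x0 1 hx0r hf3
end
end

section
/- Assume a satisfies the strongly degenerate (SD) hypothesis with degeneracy point x0 and constant K. Then H¹_a(0,1) coincides with the set X of all u ∈ L²(0,1) that are locally absolutely continuous on [0,1] \ {x0}, satisfy √a u′ ∈ L²(0,1), au ∈ H¹₀(0,1), and such that au extends continuously to x0 with (au)(x0) = 0 and u(0) = u(1) = 0. In particular, for every u ∈ H¹_a(0,1) one has lim_{x→x0} a(x)u(x) = 0. -/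
open MeasureTheory Set Filter

noncomputable section

open Topology NNReal
section ACBasic

variable {f g : ℝ → ℝ} {c d : ℝ}

lemma ACOn.unifCont (hf : ACOn f c d) : ∀ ε > (0:ℝ), ∃ δ > (0:ℝ),
    ∀ x ∈ Icc c d, ∀ y ∈ Icc c d, |x - y| < δ → |f x - f y| < ε := by
  intro ε hε
  obtain ⟨δ, hδ, H⟩ := hf ε hε
  refine ⟨δ, hδ, fun x hx y hy hxy => ?_⟩
  have key : ∀ p q, p ∈ Icc c d → q ∈ Icc c d → p ≤ q → q - p < δ → |f q - f p| < ε := by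
    intro p q hp hq hpq hlt
    have h1 := H 1 (fun _ => p) (fun _ => q) (fun _ => ⟨hp.1, hpq, hq.2⟩)
      (fun i j hij => absurd (Subsingleton.elim i j) hij) (by simpa using hlt)
    simpa using h1
  rcases le_total x y with h | h
  · rw [abs_sub_comm]
    exact key x y hx hy h (abs_sub_lt_iff.mp hxy).2
  · exact key y x hy hx h (abs_sub_lt_iff.mp hxy).1

lemma ACOn.continuousOn (hf : ACOn f c d) : ContinuousOn f (Icc c d) := by
  rw [Metric.continuousOn_iff]
  intro b hb ε hε
  obtain ⟨δ, hδ, H⟩ := hf.unifCont ε hε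
  exact ⟨δ, hδ, fun x hx hxb => by
    simpa [Real.dist_eq] using H x hx b hb (by simpa [Real.dist_eq] using hxb)⟩

lemma ACOn.sub (hf : ACOn f c d) (hg : ACOn g c d) : ACOn (fun x => f x - g x) c d := by
  intro ε hε
  obtain ⟨δ₁, hδ₁, H₁⟩ := hf (ε/2) (by linarith)
  obtain ⟨δ₂, hδ₂, H₂⟩ := hg (ε/2) (by linarith)
  refine ⟨min δ₁ δ₂, lt_min hδ₁ hδ₂, fun n cc dd h1 h2 h3 => ?_⟩
  have A := H₁ n cc dd h1 h2 (h3.trans_le (min_le_left _ _))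
  have B := H₂ n cc dd h1 h2 (h3.trans_le (min_le_right _ _))
  calc ∑ i, |(f (dd i) - g (dd i)) - (f (cc i) - g (cc i))|
      ≤ ∑ i, (|f (dd i) - f (cc i)| + |g (dd i) - g (cc i)|) := by
        apply Finset.sum_le_sum; intro i _
        have : (f (dd i) - g (dd i)) - (f (cc i) - g (cc i))
            = (f (dd i) - f (cc i)) - (g (dd i) - g (cc i)) := by ring
        rw [this]; exact abs_sub _ _
    _ = (∑ i, |f (dd i) - f (cc i)|) + ∑ i, |g (dd i) - g (cc i)| := Finset.sum_add_distrib
    _ < ε/2 + ε/2 := add_lt_add A B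
    _ = ε := by ring

lemma Ioo_succ_disjoint {u : ℕ → ℝ} (hu : Monotone u) {i j : ℕ} (hij : i ≠ j) :
    Ioo (u i) (u (i+1)) ∩ Ioo (u j) (u (j+1)) = ∅ := by
  rcases hij.lt_or_gt with h | h
  · ext z; simp only [mem_inter_iff, mem_Ioo, mem_empty_iff_false, iff_false]
    rintro ⟨⟨-, h2⟩, ⟨h3, -⟩⟩
    exact absurd (h2.trans_le ((hu h).trans_lt h3).le) (lt_irrefl _)
  · ext z; simp only [mem_inter_iff, mem_Ioo, mem_empty_iff_false, iff_false]
    rintro ⟨⟨h1, -⟩, ⟨-, h4⟩⟩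
    exact absurd (h4.trans_le ((hu h).trans_lt h1).le) (lt_irrefl _)

lemma ACOn.eVariationOn_small (hf : ACOn f c d) {ε : ℝ} (hε : 0 < ε) :
    ∃ δ > (0:ℝ), ∀ s t, c ≤ s → s ≤ t → t ≤ d → t - s < δ →
      eVariationOn f (Icc s t) ≤ ENNReal.ofReal ε := by
  obtain ⟨δ, hδ, H⟩ := hf ε hε
  refine ⟨δ, hδ, fun s t hcs hst htd hlen => ?_⟩
  apply iSup_le
  rintro ⟨n, ⟨u, hu, us⟩⟩
  have key : ∑ i ∈ Finset.range n, dist (f (u (i + 1))) (f (u i)) < ε := by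
    have := H n (fun i : Fin n => u i) (fun i : Fin n => u (i+1))
      (fun i => ⟨hcs.trans (us i).1, hu (Nat.le_succ _), (us (i+1)).2.trans htd⟩)
      (fun i j hij => Ioo_succ_disjoint hu (fun h => hij (Fin.ext (by exact_mod_cast h))))
      ?_
    · rw [← Fin.sum_univ_eq_sum_range (fun i => dist (f (u (i + 1))) (f (u i))) n]
      simpa [Real.dist_eq] using this
    · rw [Fin.sum_univ_eq_sum_range (fun i => u (i+1) - u i) n, Finset.sum_range_sub u]
      have h1 : u n - u 0 ≤ t - s := sub_le_sub (us n).2 (us 0).1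
      linarith
  calc ∑ i ∈ Finset.range n, edist (f (u (i + 1))) (f (u i))
      = ∑ i ∈ Finset.range n, ENNReal.ofReal (dist (f (u (i + 1))) (f (u i))) := by
        simp [edist_dist]
    _ = ENNReal.ofReal (∑ i ∈ Finset.range n, dist (f (u (i + 1))) (f (u i))) :=
        (ENNReal.ofReal_sum_of_nonneg (fun i _ => dist_nonneg)).symm
    _ ≤ ENNReal.ofReal ε := ENNReal.ofReal_le_ofReal key.le

lemma ACOn.boundedVariationOn (hf : ACOn f c d) (hcd : c ≤ d) :
    BoundedVariationOn f (Icc c d) := by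
  obtain ⟨δ, hδ, H⟩ := hf.eVariationOn_small (ε := 1) one_pos
  have main : ∀ n : ℕ, ∀ s t, c ≤ s → s ≤ t → t ≤ d → t - s ≤ n * (δ/2) →
      eVariationOn f (Icc s t) ≤ (n+1 : ℕ) := by
    intro n
    induction n with
    | zero =>
      intro s t hcs hst htd hlen
      simp only [Nat.cast_zero, zero_mul] at hlen
      exact (H s t hcs hst htd (by linarith)).trans (by simp)
    | succ n ih =>
      intro s t hcs hst htd hlen
      set m := max s (t - δ/2) with hm
      have hsm : s ≤ m := le_max_left _ _
      have hmt : m ≤ t := max_le hst (by linarith)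
      have e1 : eVariationOn f (Icc s m) + eVariationOn f (Icc m t)
          = eVariationOn f (Icc s t) := by
        have := eVariationOn.Icc_add_Icc f hsm hmt (s := Icc s t) ⟨hsm, hmt⟩
        rwa [inter_eq_self_of_subset_right (Icc_subset_Icc le_rfl hmt),
          inter_eq_self_of_subset_right (Icc_subset_Icc hsm le_rfl),
          inter_eq_self_of_subset_right (Icc_subset_Icc le_rfl le_rfl)] at this
      have h1 : eVariationOn f (Icc s m) ≤ (n+1 : ℕ) := by
        apply ih s m hcs hsm (hmt.trans htd)
        have : t - δ/2 - s ≤ n * (δ/2) := by push_cast at hlen ⊢; linarith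
        rcases max_cases s (t - δ/2) with ⟨h, -⟩ | ⟨h, -⟩
        · rw [hm, h, sub_self]; positivity
        · rw [hm, h]; linarith
      have h2 : eVariationOn f (Icc m t) ≤ 1 := by
        refine (H m t (hcs.trans hsm) hmt htd ?_).trans (by simp)
        have : t - δ/2 ≤ m := le_max_right _ _
        linarith
      calc eVariationOn f (Icc s t) = eVariationOn f (Icc s m) + eVariationOn f (Icc m t) :=
            e1.symm
        _ ≤ (n+1 : ℕ) + 1 := add_le_add h1 h2
        _ = ((n+1)+1 : ℕ) := by push_cast; ring
  obtain ⟨n, hn⟩ := exists_nat_ge ((d - c) / (δ/2))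
  have : eVariationOn f (Icc c d) ≤ (n+1 : ℕ) := by
    apply main n c d le_rfl hcd le_rfl
    rw [div_le_iff₀ (by linarith)] at hn
    linarith
  exact fun h => by simp [h] at this

lemma ACOn.locallyBoundedVariationOn (hf : ACOn f c d) (hcd : c ≤ d) :
    LocallyBoundedVariationOn f (Icc c d) :=
  fun _ _ _ _ => (hf.boundedVariationOn hcd).mono inter_subset_left

end ACBasic
section Variation

variable {f : ℝ → ℝ} {c d : ℝ}

lemma eVariationOn_exists_partition (hfin : BoundedVariationOn f (Icc c d))
    {s t : ℝ} (hst : s ≤ t) (hs : c ≤ s) (ht : t ≤ d) {η : ℝ} (hη : 0 < η) :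
    ∃ (m : ℕ) (u : ℕ → ℝ), Monotone u ∧ (∀ k, u k ∈ Icc s t) ∧
      eVariationOn f (Icc s t) ≤
        ENNReal.ofReal (∑ k ∈ Finset.range m, |f (u (k+1)) - f (u k)|) + ENNReal.ofReal η := by
  set A := eVariationOn f (Icc s t) with hA
  have hAfin : A ≠ ⊤ := fun h =>
    hfin (eq_top_iff.2 (h ▸ eVariationOn.mono f (Icc_subset_Icc hs ht)))
  by_cases hle : A ≤ ENNReal.ofReal η
  · exact ⟨0, fun _ => s, monotone_const, fun _ => ⟨le_rfl, hst⟩, by simpa using hle⟩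
  · push_neg at hle
    have hsub : A - ENNReal.ofReal η < A :=
      ENNReal.sub_lt_self hAfin (fun h => by simp [h] at hle)
        (fun h => by rw [ENNReal.ofReal_eq_zero] at h; linarith)
    rw [hA] at hsub
    conv at hsub => rw [eVariationOn]
    rw [lt_iSup_iff] at hsub
    obtain ⟨⟨m, ⟨u, hu, hmem⟩⟩, hlt⟩ := hsub
    refine ⟨m, u, hu, hmem, ?_⟩
    have heq : ∑ k ∈ Finset.range m, edist (f (u (k+1))) (f (u k))
        = ENNReal.ofReal (∑ k ∈ Finset.range m, |f (u (k+1)) - f (u k)|) := by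
      rw [ENNReal.ofReal_sum_of_nonneg (fun i _ => abs_nonneg _)]
      refine Finset.sum_congr rfl (fun k _ => ?_)
      rw [edist_dist, Real.dist_eq]
    rw [heq] at hlt
    calc A = A - ENNReal.ofReal η + ENNReal.ofReal η :=
          (tsub_add_cancel_of_le hle.le).symm
      _ ≤ ENNReal.ofReal (∑ k ∈ Finset.range m, |f (u (k+1)) - f (u k)|) + ENNReal.ofReal η :=
          add_le_add_left hlt.le _

lemma ACOn.variation (hf : ACOn f c d) (hcd : c ≤ d) :
    ACOn (fun x => variationOnFromTo f (Icc c d) c x) c d := by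
  have hbv : BoundedVariationOn f (Icc c d) := hf.boundedVariationOn hcd
  have hlbv : LocallyBoundedVariationOn f (Icc c d) := hf.locallyBoundedVariationOn hcd
  intro ε hε
  obtain ⟨δ, hδ, H⟩ := hf (ε/4) (by linarith)
  refine ⟨δ, hδ, fun n cc dd h1 h2 h3 => ?_⟩
  have hterm : ∀ i, |variationOnFromTo f (Icc c d) c (dd i) -
      variationOnFromTo f (Icc c d) c (cc i)| = (eVariationOn f (Icc (cc i) (dd i))).toReal := by
    intro i
    have hmc : cc i ∈ Icc c d := ⟨(h1 i).1, (h1 i).2.1.trans (h1 i).2.2⟩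
    have hmd : dd i ∈ Icc c d := ⟨(h1 i).1.trans (h1 i).2.1, (h1 i).2.2⟩
    have hadd := variationOnFromTo.add hlbv (left_mem_Icc.2 hcd) hmc hmd
    have heq : variationOnFromTo f (Icc c d) c (dd i) - variationOnFromTo f (Icc c d) c (cc i)
        = variationOnFromTo f (Icc c d) (cc i) (dd i) := by linarith
    rw [heq, variationOnFromTo.eq_of_le f _ (h1 i).2.1,
      inter_eq_self_of_subset_right (Icc_subset_Icc hmc.1 hmd.2),
      abs_of_nonneg ENNReal.toReal_nonneg]
  have hfini : ∀ i : Fin n, eVariationOn f (Icc (cc i) (dd i)) ≠ ⊤ := fun i h =>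
    hbv (eq_top_iff.2 (h ▸ eVariationOn.mono f (Icc_subset_Icc (h1 i).1 (h1 i).2.2)))
  set η := ε / (4 * (n+1)) with hηdef
  have hη : 0 < η := by positivity
  have hchoice : ∀ i : Fin n, ∃ (mm : ℕ) (uu : ℕ → ℝ), Monotone uu ∧
      (∀ k, uu k ∈ Icc (cc i) (dd i)) ∧
      eVariationOn f (Icc (cc i) (dd i)) ≤
        ENNReal.ofReal (∑ k ∈ Finset.range mm, |f (uu (k+1)) - f (uu k)|) + ENNReal.ofReal η :=
    fun i => eVariationOn_exists_partition hbv (h1 i).2.1 (h1 i).1 (h1 i).2.2 hη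
  choose m u hu hmem hbound using hchoice
  have hIoo : ∀ (i : Fin n) (k : ℕ), Ioo (u i k) (u i (k+1)) ⊆ Ioo (cc i) (dd i) := by
    intro i k z hz
    exact ⟨(hmem i k).1.trans_lt hz.1, hz.2.trans_le (hmem i (k+1)).2⟩
  set ι := (i : Fin n) × Fin (m i) with hι
  set e : Fin (Fintype.card ι) ≃ ι := (Fintype.equivFin ι).symm with he
  set CC : Fin (Fintype.card ι) → ℝ := fun j => u (e j).1 ((e j).2 : ℕ) with hCC
  set DD : Fin (Fintype.card ι) → ℝ := fun j => u (e j).1 (((e j).2 : ℕ) + 1) with hDD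
  have hresum : ∀ g : (i : Fin n) → ℕ → ℝ,
      ∑ j, g (e j).1 ((e j).2 : ℕ) = ∑ i, ∑ k ∈ Finset.range (m i), g i k := by
    intro g
    have h0 : ∑ j, g (e j).1 ((e j).2 : ℕ) = ∑ x : ι, g x.1 (x.2 : ℕ) :=
      Equiv.sum_comp e (fun x : ι => g x.1 (x.2 : ℕ))
    rw [h0, ← Finset.univ_sigma_univ, Finset.sum_sigma]
    exact Finset.sum_congr rfl fun i _ =>
      Fin.sum_univ_eq_sum_range (fun k => g i k) (m i)
  have hH := H (Fintype.card ι) CC DD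
    (fun j => ⟨(h1 (e j).1).1.trans (hmem _ _).1, hu _ (Nat.le_succ _),
      (hmem _ _).2.trans (h1 (e j).1).2.2⟩)
    (fun j j' hjj' => by
      rcases eq_or_ne (e j).1 (e j').1 with hsame | hdiff
      · have hval : ((e j).2 : ℕ) ≠ ((e j').2 : ℕ) := by
          intro hv
          apply hjj'
          apply e.injective
          exact Sigma.ext hsame ((Fin.heq_ext_iff (by rw [hsame])).2 hv)
        show Ioo (u (e j).1 ((e j).2 : ℕ)) (u (e j).1 (((e j).2 : ℕ)+1)) ∩
            Ioo (u (e j').1 ((e j').2 : ℕ)) (u (e j').1 (((e j').2 : ℕ)+1)) = ∅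
        obtain ⟨K, hK⟩ : ∃ K : ℕ, ((e j).2 : ℕ) = K := ⟨_, rfl⟩
        obtain ⟨K', hK'⟩ : ∃ K' : ℕ, ((e j').2 : ℕ) = K' := ⟨_, rfl⟩
        rw [hK, hK'] at hval ⊢
        rw [← hsame]
        exact Ioo_succ_disjoint (hu (e j).1) hval
      · apply Set.eq_empty_of_subset_empty
        calc Ioo (CC j) (DD j) ∩ Ioo (CC j') (DD j')
            ⊆ Ioo (cc (e j).1) (dd (e j).1) ∩ Ioo (cc (e j').1) (dd (e j').1) :=
              inter_subset_inter (hIoo _ _) (hIoo _ _)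
          _ = ∅ := h2 _ _ hdiff)
    (by
      have hs1 : ∑ j, (DD j - CC j)
          = ∑ i, ∑ k ∈ Finset.range (m i), (u i (k+1) - u i k) :=
        hresum (fun i k => u i (k+1) - u i k)
      rw [hs1]
      have hs2 : ∀ i : Fin n, ∑ k ∈ Finset.range (m i), (u i (k+1) - u i k)
          ≤ dd i - cc i := by
        intro i
        rw [Finset.sum_range_sub (u i)]
        exact sub_le_sub (hmem i (m i)).2 (hmem i 0).1
      exact lt_of_le_of_lt (Finset.sum_le_sum (fun i _ => hs2 i)) h3)
  have key : ∑ i, (∑ k ∈ Finset.range (m i), |f (u i (k+1)) - f (u i k)|) < ε/4 := by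
    rw [← hresum (fun i k => |f (u i (k+1)) - f (u i k)|)]
    exact hH
  -- assemble
  have hsum1 : ∑ i, eVariationOn f (Icc (cc i) (dd i))
      ≤ ENNReal.ofReal (ε/4) + ENNReal.ofReal (n * η) := by
    calc ∑ i, eVariationOn f (Icc (cc i) (dd i))
        ≤ ∑ i : Fin n, (ENNReal.ofReal (∑ k ∈ Finset.range (m i), |f (u i (k+1)) - f (u i k)|)
            + ENNReal.ofReal η) := Finset.sum_le_sum (fun i _ => hbound i)
      _ = (∑ i : Fin n, ENNReal.ofReal (∑ k ∈ Finset.range (m i), |f (u i (k+1)) - f (u i k)|))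
            + ∑ _i : Fin n, ENNReal.ofReal η := Finset.sum_add_distrib
      _ ≤ ENNReal.ofReal (ε/4) + ENNReal.ofReal (n * η) := by
          apply add_le_add
          · rw [← ENNReal.ofReal_sum_of_nonneg
              (fun i _ => Finset.sum_nonneg (fun k _ => abs_nonneg _))]
            exact ENNReal.ofReal_le_ofReal key.le
          · rw [Finset.sum_const, Finset.card_univ, Fintype.card_fin, nsmul_eq_mul,
              ENNReal.ofReal_mul (by positivity : (0:ℝ) ≤ (n:ℝ))]
            gcongr
            simp
  have hfinsum : ∑ i, eVariationOn f (Icc (cc i) (dd i)) ≠ ⊤ := by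
    rw [← lt_top_iff_ne_top]
    exact ENNReal.sum_lt_top.2 (fun i _ => lt_top_iff_ne_top.2 (hfini i))
  have htR : ∑ i, (eVariationOn f (Icc (cc i) (dd i))).toReal ≤ ε/4 + n * η := by
    rw [← ENNReal.toReal_sum (fun i _ => hfini i)]
    calc (∑ i, eVariationOn f (Icc (cc i) (dd i))).toReal
        ≤ (ENNReal.ofReal (ε/4) + ENNReal.ofReal (n * η)).toReal :=
          ENNReal.toReal_mono (by finiteness) hsum1
      _ = ε/4 + n * η := by
          rw [ENNReal.toReal_add ENNReal.ofReal_ne_top ENNReal.ofReal_ne_top,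
            ENNReal.toReal_ofReal (by positivity), ENNReal.toReal_ofReal (by positivity)]
  have hnη : (n:ℝ) * η ≤ ε/4 := by
    have h1 : (n:ℝ)/(n+1) ≤ 1 := by
      rw [div_le_one (by positivity)]; linarith
    have h2 : (n:ℝ) * η = (n:ℝ)*ε/(4*((n:ℝ)+1)) := by
      rw [hηdef]; ring
    rw [h2, div_le_div_iff₀ (by positivity) (by norm_num)]
    nlinarith [hε.le, (Nat.cast_nonneg n : (0:ℝ) ≤ n)]
  calc ∑ i, |variationOnFromTo f (Icc c d) c (dd i) - variationOnFromTo f (Icc c d) c (cc i)|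
      = ∑ i, (eVariationOn f (Icc (cc i) (dd i))).toReal :=
        Finset.sum_congr rfl (fun i _ => hterm i)
    _ ≤ ε/4 + n * η := htR
    _ ≤ ε/4 + ε/4 := by linarith
    _ < ε := by linarith

end Variation
section MonoFTC

lemma isOpen_preconnected_eq_Ioo {t : Set ℝ} (ht : IsOpen t) (hpc : IsPreconnected t)
    (hne : t.Nonempty) (hfin : volume t ≠ ⊤) : ∃ a b : ℝ, a < b ∧ t = Ioo a b := by
  have hmem := hpc.mem_intervals
  simp only [mem_insert_iff, mem_singleton_iff] at hmem
  rcases hmem with h|h|h|h|h|h|h|h|h|h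
  · exfalso
    have hle : sInf t ≤ sSup t := (nonempty_Icc).1 (h ▸ hne)
    have h2 : Icc (sInf t) (sSup t) = Ioo (sInf t) (sSup t) := by
      rw [← interior_Icc, (h ▸ ht : IsOpen (Icc (sInf t) (sSup t))).interior_eq]
    have := left_mem_Icc.2 hle
    rw [h2] at this
    exact lt_irrefl _ this.1
  · exfalso
    have hlt : sInf t < sSup t := (nonempty_Ico).1 (h ▸ hne)
    have h2 : Ico (sInf t) (sSup t) = Ioo (sInf t) (sSup t) := by
      rw [← interior_Ico, (h ▸ ht : IsOpen (Ico (sInf t) (sSup t))).interior_eq]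
    have := left_mem_Ico.2 hlt
    rw [h2] at this
    exact lt_irrefl _ this.1
  · exfalso
    have hlt : sInf t < sSup t := (nonempty_Ioc).1 (h ▸ hne)
    have h2 : Ioc (sInf t) (sSup t) = Ioo (sInf t) (sSup t) := by
      rw [← interior_Ioc, (h ▸ ht : IsOpen (Ioc (sInf t) (sSup t))).interior_eq]
    have := right_mem_Ioc.2 hlt
    rw [h2] at this
    exact lt_irrefl _ this.2
  · exact ⟨sInf t, sSup t, (nonempty_Ioo).1 (h ▸ hne), h⟩
  · exact absurd (h ▸ hfin) (by simp [Real.volume_Ici])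
  · exact absurd (h ▸ hfin) (by simp [Real.volume_Ioi])
  · exact absurd (h ▸ hfin) (by simp [Real.volume_Iic])
  · exact absurd (h ▸ hfin) (by simp [Real.volume_Iio])
  · exact absurd (h ▸ hfin) (by simp)
  · exact absurd (h ▸ hne) (by simp)

lemma stieltjes_open_bound (S : StieltjesFunction ℝ) (hSc : Continuous S)
    {ε δ : ℝ} (hε : 0 < ε)
    (hGAC : ∀ n : ℕ, ∀ cc dd : Fin n → ℝ,
      (∀ i, cc i ≤ dd i) → (∀ i j, i ≠ j → Ioo (cc i) (dd i) ∩ Ioo (cc j) (dd j) = ∅) →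
      (∑ i, (dd i - cc i)) < δ → (∑ i, (S (dd i) - S (cc i))) < ε)
    {U : Set ℝ} (hU : IsOpen U) (hvol : volume U < ENNReal.ofReal δ) :
    S.measure U ≤ ENNReal.ofReal ε := by
  classical
  set T : Set (Set ℝ) := (fun x => connectedComponentIn U x) '' U with hT
  have hTopen : ∀ t ∈ T, IsOpen t := by
    rintro t ⟨x, hx, rfl⟩; exact hU.connectedComponentIn
  have hTne : ∀ t ∈ T, t.Nonempty := by
    rintro t ⟨x, hx, rfl⟩; exact ⟨x, mem_connectedComponentIn hx⟩
  have hTsub : ∀ t ∈ T, t ⊆ U := by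
    rintro t ⟨x, hx, rfl⟩; exact connectedComponentIn_subset U x
  have hTdisj : T.PairwiseDisjoint id := by
    rintro t ⟨x, hx, rfl⟩ t' ⟨y, hy, rfl⟩ hne
    rw [Function.onFun, id_eq, id_eq, disjoint_left]
    intro z hz hz'
    exact hne (by
      show connectedComponentIn U x = connectedComponentIn U y
      rw [connectedComponentIn_eq hz, connectedComponentIn_eq hz'])
  have hTcount : T.Countable :=
    hTdisj.countable_of_isOpen hTopen hTne
  have hUnion : ⋃₀ T = U := by
    apply Subset.antisymm (sUnion_subset hTsub)
    intro x hx
    exact ⟨connectedComponentIn U x, ⟨x, hx, rfl⟩, mem_connectedComponentIn hx⟩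
  -- choose endpoints of each component
  have hcomp : ∀ t : T, ∃ a b : ℝ, a < b ∧ (t : Set ℝ) = Ioo a b := by
    rintro ⟨t, htT⟩
    exact isOpen_preconnected_eq_Ioo (hTopen t htT)
      (by obtain ⟨x, hx, rfl⟩ := htT; exact isPreconnected_connectedComponentIn)
      (hTne t htT)
      (fun h => absurd ((measure_mono (hTsub t htT)).trans_lt hvol) (by rw [h]; simp))
  choose aa bb hab hIoo using hcomp
  have key : ∀ F : Finset T, ∑ t ∈ F, S.measure t ≤ ENNReal.ofReal ε := by
    intro F
    set n := F.card with hn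
    set eF : Fin F.card ≃ F := F.equivFin.symm with heF
    have hval : ∀ i : Fin F.card, ((eF i : T) : Set ℝ) = Ioo (aa (eF i)) (bb (eF i)) :=
      fun i => hIoo _
    have hdisjF : ∀ i j : Fin F.card, i ≠ j →
        Ioo (aa (eF i)) (bb (eF i)) ∩ Ioo (aa (eF j)) (bb (eF j)) = ∅ := by
      intro i j hij
      have hne : ((eF i : T) : Set ℝ) ≠ ((eF j : T) : Set ℝ) := by
        intro h
        apply hij
        apply eF.injective
        apply Subtype.ext
        apply Subtype.ext
        exact h
      have := hTdisj (eF i : T).2 (eF j : T).2 hne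
      rw [Function.onFun, disjoint_iff_inter_eq_empty] at this
      rw [← hval i, ← hval j]
      exact this
    have hmeas : ∀ i ∈ (Finset.univ : Finset (Fin F.card)),
        MeasurableSet (((eF i : T) : Set ℝ)) := by
      intro i _
      rw [hval i]; exact measurableSet_Ioo
    have hdisj' : Set.PairwiseDisjoint (↑(Finset.univ : Finset (Fin F.card)))
        (fun i => ((eF i : T) : Set ℝ)) := by
      intro i _ j _ hij
      simp only [Function.onFun]
      rw [disjoint_iff_inter_eq_empty, hval i, hval j]
      exact hdisjF i j hij
    have hfinvol : ∀ i : Fin F.card, volume ((eF i : T) : Set ℝ) ≠ ⊤ := fun i =>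
      ((measure_mono (hTsub _ (eF i : T).2)).trans_lt (hvol.trans ENNReal.ofReal_lt_top)).ne
    have hlen : ∑ i : Fin F.card, (bb (eF i) - aa (eF i)) < δ := by
      have h1 : ∀ i : Fin F.card, bb (eF i) - aa (eF i)
          = (volume ((eF i : T) : Set ℝ)).toReal := by
        intro i
        rw [hval i, Real.volume_Ioo, ENNReal.toReal_ofReal (by linarith [hab (eF i)])]
      calc ∑ i : Fin F.card, (bb (eF i) - aa (eF i))
          = ∑ i : Fin F.card, (volume ((eF i : T) : Set ℝ)).toReal :=
            Finset.sum_congr rfl (fun i _ => h1 i)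
        _ = (∑ i : Fin F.card, volume ((eF i : T) : Set ℝ)).toReal :=
            (ENNReal.toReal_sum (fun i _ => hfinvol i)).symm
        _ = (volume (⋃ i ∈ (Finset.univ : Finset (Fin F.card)), ((eF i : T) : Set ℝ))).toReal := by
            rw [measure_biUnion_finset hdisj' hmeas]
        _ ≤ (volume U).toReal := by
            apply ENNReal.toReal_mono (hvol.trans ENNReal.ofReal_lt_top).ne
            exact measure_mono (iUnion₂_subset (fun i _ => hTsub _ (eF i : T).2))
        _ < δ := ENNReal.toReal_lt_of_lt_ofReal hvol
    have hsum := hGAC F.card (fun i => aa (eF i)) (fun i => bb (eF i))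
      (fun i => (hab (eF i)).le) hdisjF hlen
    have hμt : ∀ t : T, S.measure (t : Set ℝ) = ENNReal.ofReal (S (bb t) - S (aa t)) := by
      intro t
      rw [hIoo t, StieltjesFunction.measure_Ioo]
      congr 1
      rw [leftLim_eq_of_tendsto
        ((hSc.tendsto (bb t)).mono_left nhdsWithin_le_nhds)]
    calc ∑ t ∈ F, S.measure t
        = ∑ t ∈ F, ENNReal.ofReal (S (bb t) - S (aa t)) :=
          Finset.sum_congr rfl (fun t _ => hμt t)
      _ = ∑ t : F, ENNReal.ofReal (S (bb t) - S (aa t)) :=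
          (Finset.sum_coe_sort F (fun t => ENNReal.ofReal (S (bb t) - S (aa t)))).symm
      _ = ∑ i : Fin F.card, ENNReal.ofReal (S (bb (eF i)) - S (aa (eF i))) :=
          (Equiv.sum_comp eF (fun t : F => ENNReal.ofReal (S (bb (t:T)) - S (aa (t:T))))).symm
      _ = ENNReal.ofReal (∑ i : Fin F.card, (S (bb (eF i)) - S (aa (eF i)))) := by
          rw [ENNReal.ofReal_sum_of_nonneg]
          intro i _
          exact sub_nonneg.2 (S.mono (hab (eF i)).le)
      _ ≤ ENNReal.ofReal ε := ENNReal.ofReal_le_ofReal hsum.le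
  calc S.measure U = S.measure (⋃₀ T) := by rw [hUnion]
    _ ≤ ∑' t : T, S.measure t := by
        haveI := hTcount.to_subtype
        rw [sUnion_eq_iUnion]
        exact measure_iUnion_le _
    _ ≤ ENNReal.ofReal ε := Summable.tsum_le_of_sum_le ENNReal.summable key

end MonoFTC
section MonoFTC2

lemma mono_ftc (φ : ℝ → ℝ) (hm : Monotone φ) (hc : Continuous φ)
    (hGAC : ∀ ε > (0:ℝ), ∃ δ > (0:ℝ), ∀ n : ℕ, ∀ cc dd : Fin n → ℝ,
      (∀ i, cc i ≤ dd i) → (∀ i j, i ≠ j → Ioo (cc i) (dd i) ∩ Ioo (cc j) (dd j) = ∅) →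
      (∑ i, (dd i - cc i)) < δ → (∑ i, (φ (dd i) - φ (cc i))) < ε)
    (lb ub : ℝ) (hbot : ∀ᶠ x in atBot, φ x = lb) (htop : ∀ᶠ x in atTop, φ x = ub) :
    ∃ g : ℝ → ℝ, Integrable g ∧ (∀ᵐ x, HasDerivAt φ (g x) x) ∧
      ∀ s t, s ≤ t → φ t - φ s = ∫ x in Ioc s t, g x := by
  set S : StieltjesFunction ℝ := ⟨φ, hm, fun x => hc.continuousAt.continuousWithinAt⟩ with hS
  have hSφ : (S : ℝ → ℝ) = φ := rfl
  have hblim : Tendsto φ atBot (𝓝 lb) :=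
    Tendsto.congr' (hbot.mono fun x h => h.symm) tendsto_const_nhds
  have htlim : Tendsto φ atTop (𝓝 ub) :=
    Tendsto.congr' (htop.mono fun x h => h.symm) tendsto_const_nhds
  haveI : IsFiniteMeasure S.measure :=
    ⟨by rw [S.measure_univ (l := lb) (u := ub) hblim htlim]; exact ENNReal.ofReal_lt_top⟩
  have hac : S.measure ≪ volume := by
    apply MeasureTheory.Measure.AbsolutelyContinuous.mk
    intro E hEm hE0
    have hbound : ∀ ε : ℝ, 0 < ε → S.measure E ≤ ENNReal.ofReal ε := by
      intro ε hε
      obtain ⟨δ, hδ, H⟩ := hGAC ε hε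
      obtain ⟨U, hEU, hUopen, hUvol⟩ :=
        Set.exists_isOpen_lt_of_lt E (ENNReal.ofReal δ) (by
          rw [hE0]; exact ENNReal.ofReal_pos.2 hδ)
      exact (measure_mono hEU).trans
        (stieltjes_open_bound S (by rw [hSφ]; exact hc) hε (by exact H) hUopen hUvol)
    by_contra hne
    have hpos : 0 < S.measure E := (zero_le : 0 ≤ S.measure E).lt_of_ne (Ne.symm hne)
    have hfin : S.measure E ≠ ⊤ := measure_ne_top _ _
    set ε := (S.measure E).toReal / 2 with hε
    have hε2 : 0 < ε := by
      rw [hε]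
      have := ENNReal.toReal_pos hne hfin
      linarith
    have := hbound ε hε2
    rw [hε] at this
    have h2 : S.measure E ≤ ENNReal.ofReal ((S.measure E).toReal / 2) := this
    have h3 : (S.measure E).toReal ≤ (S.measure E).toReal / 2 := by
      have := ENNReal.toReal_mono ENNReal.ofReal_ne_top h2
      rwa [ENNReal.toReal_ofReal (by positivity)] at this
    have := ENNReal.toReal_pos hne hfin
    linarith
  set g : ℝ → ℝ := fun x => (S.measure.rnDeriv volume x).toReal with hg
  refine ⟨g, Measure.integrable_toReal_rnDeriv, ?_, ?_⟩
  · exact S.ae_hasDerivAt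
  · intro s t hst
    have h1 : S.measure (Ioc s t) = ENNReal.ofReal (φ t - φ s) := S.measure_Ioc s t
    have h2 : S.measure (Ioc s t) = ∫⁻ x in Ioc s t, S.measure.rnDeriv volume x := by
      conv_lhs => rw [← Measure.withDensity_rnDeriv_eq S.measure volume hac]
      rw [withDensity_apply _ measurableSet_Ioc]
    have h3 : ∫ x in Ioc s t, g x
        = (∫⁻ x in Ioc s t, S.measure.rnDeriv volume x).toReal := by
      rw [hg]
      apply MeasureTheory.integral_toReal
      · exact (Measure.measurable_rnDeriv _ _).aemeasurable
      · exact ae_restrict_of_ae (Measure.rnDeriv_lt_top _ _)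
    rw [h3, ← h2, h1, ENNReal.toReal_ofReal (sub_nonneg.2 (hm hst))]

end MonoFTC2
section ACFTC

lemma Ioo_projIcc_subset {c d : ℝ} (h : c ≤ d) (x y : ℝ) :
    Ioo ((projIcc c d h x : ℝ)) ((projIcc c d h y : ℝ)) ⊆ Ioo x y := by
  intro z hz
  have hzc : c < z := lt_of_le_of_lt (projIcc c d h x).2.1 hz.1
  have hzd : z < d := lt_of_lt_of_le hz.2 (projIcc c d h y).2.2
  have hproj : (projIcc c d h z : ℝ) = z := by
    rw [projIcc_of_mem h ⟨hzc.le, hzd.le⟩]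
  constructor
  · by_contra hle
    push_neg at hle
    have := monotone_projIcc h hle
    rw [Subtype.coe_le_coe.symm] at this
    rw [hproj] at this
    exact absurd (lt_of_lt_of_le hz.1 this) (lt_irrefl _)
  · by_contra hle
    push_neg at hle
    have := monotone_projIcc h hle
    rw [Subtype.coe_le_coe.symm] at this
    rw [hproj] at this
    exact absurd (lt_of_le_of_lt this hz.2) (lt_irrefl _)

lemma extend_mono_AC {ψ : ℝ → ℝ} {c d : ℝ} (hcd : c < d)
    (hmono : MonotoneOn ψ (Icc c d)) (hAC : ACOn ψ c d) :
    ∃ g : ℝ → ℝ, Integrable g ∧ (∀ᵐ x, x ∈ Ioo c d → HasDerivAt ψ (g x) x) ∧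
      ∀ s t, c ≤ s → s ≤ t → t ≤ d → ψ t - ψ s = ∫ x in Ioc s t, g x := by
  set Φ : ℝ → ℝ := fun x => ψ ((projIcc c d hcd.le x : ℝ)) with hΦ
  have hΦeq : ∀ x ∈ Icc c d, Φ x = ψ x := by
    intro x hx
    rw [hΦ]
    simp only
    rw [projIcc_of_mem hcd.le hx]
  have hΦmono : Monotone Φ := fun x y hxy =>
    hmono (projIcc c d hcd.le x).2 (projIcc c d hcd.le y).2
      (Subtype.coe_le_coe.2 (monotone_projIcc hcd.le hxy))
  have hΦcont : Continuous Φ :=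
    hAC.continuousOn.comp_continuous
      (continuous_subtype_val.comp continuous_projIcc) (fun x => (projIcc c d hcd.le x).2)
  have hΦGAC : ∀ ε > (0:ℝ), ∃ δ > (0:ℝ), ∀ n : ℕ, ∀ cc dd : Fin n → ℝ,
      (∀ i, cc i ≤ dd i) → (∀ i j, i ≠ j → Ioo (cc i) (dd i) ∩ Ioo (cc j) (dd j) = ∅) →
      (∑ i, (dd i - cc i)) < δ → (∑ i, (Φ (dd i) - Φ (cc i))) < ε := by
    intro ε hε
    obtain ⟨δ, hδ, H⟩ := hAC ε hε
    refine ⟨δ, hδ, fun n cc dd h1 h2 h3 => ?_⟩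
    set cc' : Fin n → ℝ := fun i => (projIcc c d hcd.le (cc i) : ℝ) with hcc'
    set dd' : Fin n → ℝ := fun i => (projIcc c d hcd.le (dd i) : ℝ) with hdd'
    have hH := H n cc' dd'
      (fun i => ⟨(projIcc c d hcd.le (cc i)).2.1,
        Subtype.coe_le_coe.2 (monotone_projIcc hcd.le (h1 i)),
        (projIcc c d hcd.le (dd i)).2.2⟩)
      (fun i j hij => Set.eq_empty_of_subset_empty
        ((inter_subset_inter (Ioo_projIcc_subset hcd.le _ _)
          (Ioo_projIcc_subset hcd.le _ _)).trans (le_of_eq (h2 i j hij))))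
      (lt_of_le_of_lt (Finset.sum_le_sum (fun i _ => by
        have hlip := (LipschitzWith.projIcc hcd.le).dist_le_mul (dd i) (cc i)
        have hle : dist ((projIcc c d hcd.le (dd i) : ℝ)) ((projIcc c d hcd.le (cc i) : ℝ))
            ≤ dist (dd i) (cc i) := by
          calc dist ((projIcc c d hcd.le (dd i) : ℝ)) ((projIcc c d hcd.le (cc i) : ℝ))
              = dist (projIcc c d hcd.le (dd i)) (projIcc c d hcd.le (cc i)) :=
                (Subtype.dist_eq _ _).symm
            _ ≤ 1 * dist (dd i) (cc i) := hlip
            _ = dist (dd i) (cc i) := one_mul _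
        have h4 : dd' i - cc' i ≤ |dd' i - cc' i| := le_abs_self _
        have h5 : |dd' i - cc' i| ≤ |dd i - cc i| := by
          rw [← Real.dist_eq, ← Real.dist_eq]
          exact hle
        have h6 : |dd i - cc i| = dd i - cc i := abs_of_nonneg (by linarith [h1 i])
        linarith)) h3)
    calc ∑ i, (Φ (dd i) - Φ (cc i)) = ∑ i, (ψ (dd' i) - ψ (cc' i)) := rfl
      _ ≤ ∑ i, |ψ (dd' i) - ψ (cc' i)| := Finset.sum_le_sum (fun i _ => le_abs_self _)
      _ < ε := hH
  obtain ⟨g, hgInt, hgDeriv, hgEq⟩ := mono_ftc Φ hΦmono hΦcont hΦGAC (ψ c) (ψ d)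
    (by
      filter_upwards [eventually_le_atBot c] with x hx
      rw [hΦ]
      simp only
      rw [projIcc_of_le_left hcd.le hx])
    (by
      filter_upwards [eventually_ge_atTop d] with x hx
      rw [hΦ]
      simp only
      rw [projIcc_of_right_le hcd.le hx])
  refine ⟨g, hgInt, ?_, ?_⟩
  · filter_upwards [hgDeriv] with x hx hxIoo
    apply hx.congr_of_eventuallyEq
    filter_upwards [isOpen_Ioo.mem_nhds hxIoo] with y hy
    exact (hΦeq y (Ioo_subset_Icc_self hy)).symm
  · intro s t hcs hst htd
    rw [← hΦeq s ⟨hcs, hst.trans htd⟩, ← hΦeq t ⟨hcs.trans hst, htd⟩]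
    exact hgEq s t hst

lemma acon_ftc {f : ℝ → ℝ} {c d : ℝ} (hf : ACOn f c d) (hcd : c < d) :
    ∃ g : ℝ → ℝ, IntegrableOn g (Icc c d) ∧
      (∀ᵐ x, x ∈ Ioo c d → (DifferentiableAt ℝ f x ∧ deriv f x = g x)) ∧
      ∀ s t, c ≤ s → s ≤ t → t ≤ d → f t - f s = ∫ x in Ioc s t, g x := by
  have hlbv : LocallyBoundedVariationOn f (Icc c d) := hf.locallyBoundedVariationOn hcd.le
  have hcmem : c ∈ Icc c d := left_mem_Icc.2 hcd.le
  set p : ℝ → ℝ := fun x => variationOnFromTo f (Icc c d) c x with hp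
  set q : ℝ → ℝ := fun x => p x - f x with hq
  have hpAC : ACOn p c d := hf.variation hcd.le
  have hqAC : ACOn q c d := hpAC.sub hf
  have hpmono : MonotoneOn p (Icc c d) := variationOnFromTo.monotoneOn hlbv hcmem
  have hqmono : MonotoneOn q (Icc c d) := fun x hx y hy hxy =>
    variationOnFromTo.sub_self_monotoneOn hlbv hcmem hx hy hxy
  obtain ⟨gp, hgpInt, hgpD, hgpEq⟩ := extend_mono_AC hcd hpmono hpAC
  obtain ⟨gq, hgqInt, hgqD, hgqEq⟩ := extend_mono_AC hcd hqmono hqAC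
  refine ⟨fun x => gp x - gq x, (hgpInt.sub hgqInt).integrableOn, ?_, ?_⟩
  · filter_upwards [hgpD, hgqD] with x hx1 hx2 hxIoo
    have hD : HasDerivAt f (gp x - gq x) x := by
      have : f = fun y => p y - q y := funext fun y => by rw [hq]; ring
      rw [this]
      exact (hx1 hxIoo).sub (hx2 hxIoo)
    exact ⟨hD.differentiableAt, hD.deriv⟩
  · intro s t hcs hst htd
    have h1 := hgpEq s t hcs hst htd
    have h2 := hgqEq s t hcs hst htd
    have h3 : f t - f s = (p t - p s) - (q t - q s) := by rw [hq]; ring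
    rw [h3, h1, h2, ← MeasureTheory.integral_sub hgpInt.integrableOn hgqInt.integrableOn]

end ACFTC
section Helpers

lemma abs_deriv_le_of_lipschitzOnWith {a : ℝ → ℝ} {L : ℝ≥0}
    (ha : LipschitzOnWith L a (Icc 0 1)) {x : ℝ} (hx : x ∈ Ioo (0:ℝ) 1)
    (hd : DifferentiableAt ℝ a x) : |deriv a x| ≤ L := by
  have htend := hasDerivAt_iff_tendsto_slope.1 hd.hasDerivAt
  have hbound : ∀ᶠ y in 𝓝[≠] x, |slope a x y| ≤ (L:ℝ) := by
    have hmem : Ioo (0:ℝ) 1 ∈ 𝓝 x := isOpen_Ioo.mem_nhds hx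
    filter_upwards [nhdsWithin_le_nhds hmem, self_mem_nhdsWithin] with y hy hyx
    have hyx' : y ≠ x := hyx
    rw [slope_def_field, abs_div, div_le_iff₀ (abs_pos.2 (sub_ne_zero.2 hyx'))]
    have := ha.dist_le_mul y (Ioo_subset_Icc_self hy) x (Ioo_subset_Icc_self hx)
    rw [Real.dist_eq, Real.dist_eq] at this
    exact this
  have : Tendsto (fun y => |slope a x y|) (𝓝[≠] x) (𝓝 |deriv a x|) := htend.abs
  exact le_of_tendsto this hbound

lemma lipschitz_mul_ACOn {a u : ℝ → ℝ} {L : ℝ≥0} {c d : ℝ}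
    (ha : LipschitzOnWith L a (Icc 0 1)) (hu : ACOn u c d)
    (h0 : 0 ≤ c) (hcd : c ≤ d) (h1 : d ≤ 1) :
    ACOn (fun x => a x * u x) c d := by
  obtain ⟨Ma, hMa⟩ := isCompact_Icc.exists_bound_of_continuousOn
    (ha.continuousOn.mono (Icc_subset_Icc h0 h1) : ContinuousOn a (Icc c d))
  obtain ⟨Mu, hMu⟩ := isCompact_Icc.exists_bound_of_continuousOn hu.continuousOn
  have hMa0 : 0 ≤ Ma := le_trans (norm_nonneg _) (hMa c (left_mem_Icc.2 hcd))
  have hMu0 : 0 ≤ Mu := le_trans (norm_nonneg _) (hMu c (left_mem_Icc.2 hcd))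
  intro ε hε
  obtain ⟨δu, hδu, Hu⟩ := hu (ε / (2 * (Ma + 1))) (by positivity)
  refine ⟨min δu (ε / (2 * ((L:ℝ) + 1) * (Mu + 1))), lt_min hδu (by positivity),
    fun n cc dd hb hdisj hlen => ?_⟩
  have hu_sum := Hu n cc dd hb hdisj (hlen.trans_le (min_le_left _ _))
  have hlen2 : ∑ i, (dd i - cc i) < ε / (2 * ((L:ℝ) + 1) * (Mu + 1)) :=
    hlen.trans_le (min_le_right _ _)
  have hterm : ∀ i : Fin n, |a (dd i) * u (dd i) - a (cc i) * u (cc i)|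
      ≤ Ma * |u (dd i) - u (cc i)| + ((L:ℝ) + 1) * (Mu + 1) * (dd i - cc i) := by
    intro i
    have hbi := hb i
    have hdmem : dd i ∈ Icc c d := ⟨hbi.1.trans hbi.2.1, hbi.2.2⟩
    have hcmem : cc i ∈ Icc c d := ⟨hbi.1, hbi.2.1.trans hbi.2.2⟩
    have heq : a (dd i) * u (dd i) - a (cc i) * u (cc i)
        = a (dd i) * (u (dd i) - u (cc i)) + u (cc i) * (a (dd i) - a (cc i)) := by ring
    have hlips : |a (dd i) - a (cc i)| ≤ (L:ℝ) * (dd i - cc i) := by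
      have := ha.dist_le_mul (dd i) (Icc_subset_Icc h0 h1 hdmem)
        (cc i) (Icc_subset_Icc h0 h1 hcmem)
      rw [Real.dist_eq, Real.dist_eq] at this
      calc |a (dd i) - a (cc i)| ≤ (L:ℝ) * |dd i - cc i| := this
        _ = (L:ℝ) * (dd i - cc i) := by rw [abs_of_nonneg (by linarith [hbi.2.1])]
    calc |a (dd i) * u (dd i) - a (cc i) * u (cc i)|
        ≤ |a (dd i)| * |u (dd i) - u (cc i)| + |u (cc i)| * |a (dd i) - a (cc i)| := by
          rw [heq]
          exact (abs_add_le _ _).trans (by rw [abs_mul, abs_mul])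
      _ ≤ Ma * |u (dd i) - u (cc i)| + Mu * ((L:ℝ) * (dd i - cc i)) := by
          apply add_le_add
          · exact mul_le_mul_of_nonneg_right
              ((Real.norm_eq_abs _ ▸ hMa (dd i) hdmem)) (abs_nonneg _)
          · exact mul_le_mul ((Real.norm_eq_abs _ ▸ hMu (cc i) hcmem)) hlips
              (abs_nonneg _) hMu0
      _ ≤ Ma * |u (dd i) - u (cc i)| + ((L:ℝ) + 1) * (Mu + 1) * (dd i - cc i) := by
          have h4 : (0:ℝ) ≤ dd i - cc i := by linarith [hbi.2.1]
          have : Mu * ((L:ℝ) * (dd i - cc i)) ≤ ((L:ℝ) + 1) * (Mu + 1) * (dd i - cc i) := by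
            have hL0 : (0:ℝ) ≤ L := L.2
            nlinarith
          linarith
  calc ∑ i, |a (dd i) * u (dd i) - a (cc i) * u (cc i)|
      ≤ ∑ i, (Ma * |u (dd i) - u (cc i)| + ((L:ℝ) + 1) * (Mu + 1) * (dd i - cc i)) :=
        Finset.sum_le_sum (fun i _ => hterm i)
    _ = Ma * (∑ i, |u (dd i) - u (cc i)|)
        + ((L:ℝ) + 1) * (Mu + 1) * (∑ i, (dd i - cc i)) := by
        rw [Finset.sum_add_distrib, Finset.mul_sum, Finset.mul_sum]
    _ < ε := by
        have h5 : Ma * (∑ i, |u (dd i) - u (cc i)|) ≤ ε/2 := by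
          have h6 : Ma * (∑ i, |u (dd i) - u (cc i)|) ≤ Ma * (ε / (2 * (Ma + 1))) :=
            mul_le_mul_of_nonneg_left hu_sum.le hMa0
          calc Ma * (∑ i, |u (dd i) - u (cc i)|) ≤ Ma * (ε / (2 * (Ma + 1))) := h6
            _ ≤ (Ma + 1) * (ε / (2 * (Ma + 1))) := by
                apply mul_le_mul_of_nonneg_right (by linarith) (by positivity)
            _ = ε/2 := by field_simp
        have h7 : ((L:ℝ) + 1) * (Mu + 1) * (∑ i, (dd i - cc i)) < ε/2 := by
          have hpos : (0:ℝ) < ((L:ℝ) + 1) * (Mu + 1) := by positivity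
          calc ((L:ℝ) + 1) * (Mu + 1) * (∑ i, (dd i - cc i))
              < ((L:ℝ) + 1) * (Mu + 1) * (ε / (2 * ((L:ℝ) + 1) * (Mu + 1))) := by
                exact (mul_lt_mul_iff_right₀ hpos).2 hlen2
            _ = ε/2 := by field_simp
        linarith
  
lemma blowup_right {v : ℝ → ℝ} {p q C : ℝ} (hpq : p < q) (hC : 0 < C)
    (hint : IntegrableOn (fun x => v x ^ 2) (Ioo p q))
    (hbd : ∀ t ∈ Ioo p q, C / (t - p) ≤ |v t|) : False := by
  set r := q - p with hr
  have hr0 : 0 < r := by rw [hr]; linarith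
  set M := ∫ x in Ioo p q, v x ^ 2 with hM
  have hM0 : 0 ≤ M := setIntegral_nonneg measurableSet_Ioo (fun x _ => sq_nonneg _)
  set target := (M + 1) / C^2 + 2 / r with htarget
  have htarget0 : 0 < target := by positivity
  set e := min (1 / target) (r / 4) with he
  have he0 : 0 < e := lt_min (by positivity) (by positivity)
  have hetarget : target ≤ 1 / e := by
    have h1 : e ≤ 1 / target := min_le_left _ _
    calc target = 1 / (1 / target) := by rw [one_div_one_div]
      _ ≤ 1 / e := one_div_le_one_div_of_le he0 h1
  set m := p + r / 2 with hm
  have hem : p + e ≤ m := by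
    have : e ≤ r / 4 := min_le_right _ _
    rw [hm]; linarith
  have hmq : m < q := by rw [hm, hr]; linarith
  have hpe : p < p + e := by linarith
  -- the singular integrand and its antiderivative
  set f : ℝ → ℝ := fun t => C^2 * ((t - p)⁻¹)^2 with hf
  set Φ : ℝ → ℝ := fun t => -C^2 * (t - p)⁻¹ with hΦ
  have hderiv : ∀ t ∈ uIcc (p + e) m, HasDerivAt Φ (f t) t := by
    intro t ht
    rw [uIcc_of_le hem] at ht
    have htp : t - p ≠ 0 := by
      have : p + e ≤ t := ht.1
      have : 0 < t - p := by linarith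
      exact this.ne'
    have h1 : HasDerivAt (fun s => s - p) 1 t := (hasDerivAt_id t).sub_const p
    have h2 := h1.inv htp
    have h3 := h2.const_mul (-C^2)
    refine h3.congr_deriv ?_
    rw [hf]
    field_simp
  have hfcont : ContinuousOn f (uIcc (p + e) m) := by
    apply ContinuousOn.mul continuousOn_const
    apply ContinuousOn.pow
    apply ContinuousOn.inv₀ (by fun_prop)
    intro t ht
    rw [uIcc_of_le hem] at ht
    have : p + e ≤ t := ht.1
    have : 0 < t - p := by linarith
    exact this.ne'
  have hfint : IntervalIntegrable f volume (p + e) m := hfcont.intervalIntegrable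
  have hFTC := intervalIntegral.integral_eq_sub_of_hasDerivAt hderiv hfint
  have hval : ∫ t in Set.Ioc (p + e) m, f t = C^2 * (1/e - 2/r) := by
    rw [← intervalIntegral.integral_of_le hem, hFTC, hΦ, hm]
    simp only
    have h2 : p + r/2 - p = r/2 := by ring
    have h3 : p + e - p = e := by ring
    rw [h2, h3]
    field_simp
    ring
  have hsub : Set.Ioc (p + e) m ⊆ Ioo p q := fun t ht =>
    ⟨lt_of_lt_of_le hpe ht.1.le, lt_of_le_of_lt ht.2 hmq⟩
  have hintv2 : IntegrableOn (fun x => v x ^ 2) (Set.Ioc (p + e) m) := hint.mono_set hsub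
  have hintf : IntegrableOn f (Set.Ioc (p + e) m) := by
    have h5 : ContinuousOn f (Icc (p+e) m) := by rwa [uIcc_of_le hem] at hfcont
    exact h5.integrableOn_Icc.mono_set Ioc_subset_Icc_self
  have hle1 : ∫ t in Set.Ioc (p + e) m, f t ≤ ∫ t in Set.Ioc (p + e) m, v t ^ 2 := by
    apply setIntegral_mono_on hintf hintv2 measurableSet_Ioc
    intro t ht
    have htmem := hsub ht
    have hbt := hbd t htmem
    have htp : 0 < t - p := by linarith [htmem.1]
    have h4 : (C / (t - p))^2 ≤ |v t|^2 := by
      apply pow_le_pow_left₀ (by positivity) hbt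
    calc f t = (C / (t - p))^2 := by rw [hf]; simp only; rw [div_pow]; field_simp
      _ ≤ |v t|^2 := h4
      _ = v t ^ 2 := sq_abs _
  have hle2 : ∫ t in Set.Ioc (p + e) m, v t ^ 2 ≤ M := by
    rw [hM]
    apply setIntegral_mono_set hint
    · filter_upwards with x using sq_nonneg _
    · exact HasSubset.Subset.eventuallyLE hsub
  have hge : M + 1 ≤ C^2 * (1/e - 2/r) := by
    have : target - 2/r ≤ 1/e - 2/r := by linarith
    calc M + 1 = C^2 * ((M+1)/C^2) := by field_simp
      _ = C^2 * (target - 2/r) := by rw [htarget]; ring_nf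
      _ ≤ C^2 * (1/e - 2/r) := by nlinarith [sq_nonneg C]
  rw [hval] at hle1
  linarith

lemma blowup_left {v : ℝ → ℝ} {p q C : ℝ} (hpq : p < q) (hC : 0 < C)
    (hint : IntegrableOn (fun x => v x ^ 2) (Ioo p q))
    (hbd : ∀ t ∈ Ioo p q, C / (q - t) ≤ |v t|) : False := by
  set r := q - p with hr
  have hr0 : 0 < r := by rw [hr]; linarith
  set M := ∫ x in Ioo p q, v x ^ 2 with hM
  have hM0 : 0 ≤ M := setIntegral_nonneg measurableSet_Ioo (fun x _ => sq_nonneg _)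
  set target := (M + 1) / C^2 + 2 / r with htarget
  have htarget0 : 0 < target := by positivity
  set e := min (1 / target) (r / 4) with he
  have he0 : 0 < e := lt_min (by positivity) (by positivity)
  have hetarget : target ≤ 1 / e := by
    have h1 : e ≤ 1 / target := min_le_left _ _
    calc target = 1 / (1 / target) := by rw [one_div_one_div]
      _ ≤ 1 / e := one_div_le_one_div_of_le he0 h1
  set m := q - r / 2 with hm
  have hem : m ≤ q - e := by
    have : e ≤ r / 4 := min_le_right _ _
    rw [hm]; linarith
  have hpm : p < m := by rw [hm, hr]; linarith
  have heq' : q - e < q := by linarith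
  set f : ℝ → ℝ := fun t => C^2 * ((q - t)⁻¹)^2 with hf
  set Φ : ℝ → ℝ := fun t => C^2 * (q - t)⁻¹ with hΦ
  have hderiv : ∀ t ∈ uIcc m (q - e), HasDerivAt Φ (f t) t := by
    intro t ht
    rw [uIcc_of_le hem] at ht
    have htp : q - t ≠ 0 := by
      have : t ≤ q - e := ht.2
      have : 0 < q - t := by linarith
      exact this.ne'
    have h1 : HasDerivAt (fun s => q - s) (-1) t := (hasDerivAt_id t).const_sub q
    have h2 := h1.inv htp
    have h3 := h2.const_mul (C^2)
    refine h3.congr_deriv ?_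
    rw [hf]
    field_simp
  have hfcont : ContinuousOn f (uIcc m (q - e)) := by
    apply ContinuousOn.mul continuousOn_const
    apply ContinuousOn.pow
    apply ContinuousOn.inv₀ (by fun_prop)
    intro t ht
    rw [uIcc_of_le hem] at ht
    have : t ≤ q - e := ht.2
    have : 0 < q - t := by linarith
    exact this.ne'
  have hfint : IntervalIntegrable f volume m (q - e) := hfcont.intervalIntegrable
  have hFTC := intervalIntegral.integral_eq_sub_of_hasDerivAt hderiv hfint
  have hval : ∫ t in Set.Ioc m (q - e), f t = C^2 * (1/e - 2/r) := by
    rw [← intervalIntegral.integral_of_le hem, hFTC, hΦ, hm]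
    simp only
    have h2 : q - (q - r/2) = r/2 := by ring
    have h3 : q - (q - e) = e := by ring
    rw [h2, h3]
    field_simp
  have hsub : Set.Ioc m (q - e) ⊆ Ioo p q := fun t ht =>
    ⟨lt_of_lt_of_le hpm ht.1.le, lt_of_le_of_lt ht.2 heq'⟩
  have hintv2 : IntegrableOn (fun x => v x ^ 2) (Set.Ioc m (q - e)) := hint.mono_set hsub
  have hintf : IntegrableOn f (Set.Ioc m (q - e)) := by
    have h5 : ContinuousOn f (Icc m (q - e)) := by rwa [uIcc_of_le hem] at hfcont
    exact h5.integrableOn_Icc.mono_set Ioc_subset_Icc_self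
  have hle1 : ∫ t in Set.Ioc m (q - e), f t ≤ ∫ t in Set.Ioc m (q - e), v t ^ 2 := by
    apply setIntegral_mono_on hintf hintv2 measurableSet_Ioc
    intro t ht
    have htmem := hsub ht
    have hbt := hbd t htmem
    have htp : 0 < q - t := by linarith [htmem.2]
    have h4 : (C / (q - t))^2 ≤ |v t|^2 := by
      apply pow_le_pow_left₀ (by positivity) hbt
    calc f t = (C / (q - t))^2 := by rw [hf]; simp only; rw [div_pow]; field_simp
      _ ≤ |v t|^2 := h4
      _ = v t ^ 2 := sq_abs _
  have hle2 : ∫ t in Set.Ioc m (q - e), v t ^ 2 ≤ M := by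
    rw [hM]
    apply setIntegral_mono_set hint
    · filter_upwards with x using sq_nonneg _
    · exact HasSubset.Subset.eventuallyLE hsub
  have hge : M + 1 ≤ C^2 * (1/e - 2/r) := by
    have : target - 2/r ≤ 1/e - 2/r := by linarith
    calc M + 1 = C^2 * ((M+1)/C^2) := by field_simp
      _ = C^2 * (target - 2/r) := by rw [htarget]; ring_nf
      _ ≤ C^2 * (1/e - 2/r) := by nlinarith [sq_nonneg C]
  rw [hval] at hle1
  linarith

end Helpers
section Main

lemma fwd_main {a : ℝ → ℝ} {x0 K : ℝ} (ha : StronglyDegenerate a x0 K) (u : ℝ → ℝ)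
    (hu2 : MemLp u 2 (volume.restrict (Ioo (0:ℝ) 1)))
    (hloc : LocACOff u x0)
    (hau' : MemLp (fun x => Real.sqrt (a x) * deriv u x) 2 (volume.restrict (Ioo (0:ℝ) 1)))
    (hu0 : u 0 = 0) (hu1 : u 1 = 0) :
    ACOn (fun x => a x * u x) 0 1 ∧
    MemLp (fun x => a x * u x) 2 (volume.restrict (Ioo (0:ℝ) 1)) ∧
    MemLp (deriv (fun x => a x * u x)) 2 (volume.restrict (Ioo (0:ℝ) 1)) ∧
    Filter.Tendsto (fun x => a x * u x) (nhdsWithin x0 {x0}ᶜ) (nhds 0) := by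
  obtain ⟨L₀, hLip⟩ := ha.lipschitz
  obtain ⟨hx00, hx01⟩ := ha.x0_mem
  have hx0Icc : x0 ∈ Icc (0:ℝ) 1 := ⟨hx00.le, hx01.le⟩
  set F : ℝ → ℝ := fun x => a x * u x with hFdef
  set L : ℝ := max (L₀:ℝ) 1 with hLdef
  have hL1 : (1:ℝ) ≤ L := le_max_right _ _
  have hL0 : (0:ℝ) < L := lt_of_lt_of_le one_pos hL1
  have hL₀L : (L₀:ℝ) ≤ L := le_max_left _ _
  set G : ℝ → ℝ := fun x => L * |u x| + Real.sqrt L * |Real.sqrt (a x) * deriv u x| with hGdef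
  have hG0 : ∀ x, 0 ≤ G x := fun x =>
    add_nonneg (mul_nonneg hL0.le (abs_nonneg _))
      (mul_nonneg (Real.sqrt_nonneg _) (abs_nonneg _))
  have habs : ∀ x ∈ Icc (0:ℝ) 1, |a x| ≤ L * |x - x0| := by
    intro x hx
    have h1 := hLip.dist_le_mul x hx x0 hx0Icc
    rw [Real.dist_eq, Real.dist_eq, ha.a_zero, sub_zero] at h1
    calc |a x| ≤ (L₀:ℝ) * |x - x0| := h1
      _ ≤ L * |x - x0| := mul_le_mul_of_nonneg_right hL₀L (abs_nonneg _)
  have habs1 : ∀ x ∈ Icc (0:ℝ) 1, |a x| ≤ L := by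
    intro x hx
    have h2 : |x - x0| ≤ 1 := abs_le.2 ⟨by linarith [hx.1, hx01.le], by linarith [hx.2, hx00.le]⟩
    calc |a x| ≤ L * |x - x0| := habs x hx
      _ ≤ L * 1 := mul_le_mul_of_nonneg_left h2 hL0.le
      _ = L := mul_one L
  have hacont : ContinuousOn a (Icc (0:ℝ) 1) := hLip.continuousOn
  -- measurability
  have hGmem2 : MemLp G 2 (volume.restrict (Ioo (0:ℝ) 1)) := by
    rw [hGdef]
    have h1 : MemLp (fun x => L * |u x|) 2 (volume.restrict (Ioo (0:ℝ) 1)) := by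
      have := hu2.norm.const_mul L
      simpa only [Real.norm_eq_abs] using this
    have h2 : MemLp (fun x => Real.sqrt L * |Real.sqrt (a x) * deriv u x|) 2
        (volume.restrict (Ioo (0:ℝ) 1)) := by
      have := hau'.norm.const_mul (Real.sqrt L)
      simpa only [Real.norm_eq_abs] using this
    exact h1.add h2
  have hFmeas : AEStronglyMeasurable F (volume.restrict (Ioo (0:ℝ) 1)) := by
    apply AEStronglyMeasurable.mul
    · exact ((hacont.mono Ioo_subset_Icc_self).aestronglyMeasurable measurableSet_Ioo)
    · exact hu2.aestronglyMeasurable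
  have hDFmeas : AEStronglyMeasurable (deriv F) (volume.restrict (Ioo (0:ℝ) 1)) :=
    (measurable_deriv F).aestronglyMeasurable.restrict
  have hne_ae : ∀ᵐ x : ℝ, x ≠ x0 := by
    rw [ae_iff]
    simp only [ne_eq, not_not, setOf_eq_eq_singleton]
    exact measure_singleton x0
  -- pointwise bound on deriv F
  have hPB : ∀ x ∈ Ioo (0:ℝ) 1, x ≠ x0 → |deriv F x| ≤ G x := by
    intro x hx hxne
    have hxIcc : x ∈ Icc (0:ℝ) 1 := Ioo_subset_Icc_self hx
    have hapos : 0 < a x := ha.a_pos x hxIcc hxne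
    by_cases hdu : DifferentiableAt ℝ u x
    · have hda : DifferentiableAt ℝ a x := ha.a_diff x hxIcc hxne
      have hFd : HasDerivAt F (deriv a x * u x + a x * deriv u x) x := by
        have := (hda.hasDerivAt.mul hdu.hasDerivAt)
        exact this
      rw [hFd.deriv]
      have hda_le : |deriv a x| ≤ L :=
        le_trans (abs_deriv_le_of_lipschitzOnWith hLip hx hda) hL₀L
      have hsqrt : Real.sqrt (a x) ≤ Real.sqrt L :=
        Real.sqrt_le_sqrt (le_trans (le_abs_self _) (habs1 x hxIcc))
      have hterm2 : |a x * deriv u x| = Real.sqrt (a x) * |Real.sqrt (a x) * deriv u x| := by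
        conv_lhs => rw [← Real.mul_self_sqrt hapos.le]
        rw [mul_assoc, abs_mul, abs_of_nonneg (Real.sqrt_nonneg _)]
      calc |deriv a x * u x + a x * deriv u x|
          ≤ |deriv a x * u x| + |a x * deriv u x| := abs_add_le _ _
        _ = |deriv a x| * |u x| + Real.sqrt (a x) * |Real.sqrt (a x) * deriv u x| := by
            rw [abs_mul, hterm2]
        _ ≤ L * |u x| + Real.sqrt L * |Real.sqrt (a x) * deriv u x| := by
            apply add_le_add
            · exact mul_le_mul_of_nonneg_right hda_le (abs_nonneg _)
            · exact mul_le_mul_of_nonneg_right hsqrt (abs_nonneg _)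
        _ = G x := by rw [hGdef]
    · have hnd : ¬ DifferentiableAt ℝ F x := by
        intro hdF
        have hacx : ContinuousAt a x :=
          (hacont x hxIcc).continuousAt (Icc_mem_nhds hx.1 hx.2)
        have hnz : ∀ᶠ y in 𝓝 x, a y ≠ 0 := hacx.eventually_ne hapos.ne'
        have hueq : u =ᶠ[𝓝 x] fun y => F y / a y := by
          filter_upwards [hnz] with y hy
          rw [hFdef]
          simp only
          rw [eq_div_iff hy]
          ring
        have hdiv : DifferentiableAt ℝ (fun y => F y / a y) x :=
          hdF.div (ha.a_diff x hxIcc hxne) hapos.ne'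
        exact hdu (hueq.differentiableAt_iff.2 hdiv)
      rw [deriv_zero_of_not_differentiableAt hnd]
      simpa using hG0 x
  have hFbd : ∀ x ∈ Ioo (0:ℝ) 1, |F x| ≤ G x := by
    intro x hx
    have hxIcc : x ∈ Icc (0:ℝ) 1 := Ioo_subset_Icc_self hx
    calc |F x| = |a x| * |u x| := abs_mul _ _
      _ ≤ L * |u x| := mul_le_mul_of_nonneg_right (habs1 x hxIcc) (abs_nonneg _)
      _ ≤ G x := le_add_of_nonneg_right (mul_nonneg (Real.sqrt_nonneg _) (abs_nonneg _))
  -- L² memberships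
  have hFmem2 : MemLp F 2 (volume.restrict (Ioo (0:ℝ) 1)) := by
    apply MemLp.of_le hGmem2 hFmeas
    filter_upwards [ae_restrict_mem measurableSet_Ioo] with x hx
    rw [Real.norm_eq_abs, Real.norm_eq_abs, abs_of_nonneg (hG0 x)]
    exact hFbd x hx
  have hDF2 : MemLp (deriv F) 2 (volume.restrict (Ioo (0:ℝ) 1)) := by
    apply MemLp.of_le hGmem2 hDFmeas
    filter_upwards [ae_restrict_mem measurableSet_Ioo, ae_restrict_of_ae hne_ae] with x hx hxne
    rw [Real.norm_eq_abs, Real.norm_eq_abs, abs_of_nonneg (hG0 x)]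
    exact hPB x hx hxne
  -- integrability
  haveI : IsFiniteMeasure (volume.restrict (Ioo (0:ℝ) 1)) := by
    constructor
    rw [Measure.restrict_apply_univ, Real.volume_Ioo]
    exact ENNReal.ofReal_lt_top
  have hGint : Integrable G (volume.restrict (Ioo (0:ℝ) 1)) :=
    memLp_one_iff_integrable.1 (hGmem2.mono_exponent (by norm_num))
  have hDFint : Integrable (deriv F) (volume.restrict (Ioo (0:ℝ) 1)) :=
    memLp_one_iff_integrable.1 (hDF2.mono_exponent (by norm_num))
  have hIntOn : ∀ h : ℝ → ℝ, Integrable h (volume.restrict (Ioo (0:ℝ) 1)) →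
      ∀ p q, 0 ≤ p → q ≤ 1 → IntegrableOn h (Ioc p q) := by
    intro h hh p q hp hq
    have h1 : IntegrableOn h (Ioo p q) :=
      hh.mono_measure (Measure.restrict_mono (Ioo_subset_Ioo hp hq) le_rfl)
    rwa [IntegrableOn, Measure.restrict_congr_set Ioo_ae_eq_Ioc] at h1
  -- FTC on intervals avoiding x0
  have hFTCside : ∀ p q, 0 ≤ p → p ≤ q → q ≤ 1 → x0 ∉ Icc p q →
      F q - F p = ∫ x in Ioc p q, deriv F x := by
    intro p q hp hpq hq hx0n
    rcases eq_or_lt_of_le hpq with rfl | hpq'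
    · simp
    · have hAC : ACOn F p q := by
        rw [hFdef]
        exact lipschitz_mul_ACOn hLip (hloc p q hp hpq hq hx0n) hp hpq hq
      obtain ⟨g, hgInt, hgae, hgeq⟩ := acon_ftc hAC hpq'
      rw [hgeq p q le_rfl hpq le_rfl]
      apply MeasureTheory.integral_congr_ae
      rw [Measure.restrict_congr_set Ioo_ae_eq_Ioc.symm]
      have h2 : ∀ᵐ x ∂(volume.restrict (Ioo p q)), g x = deriv F x := by
        filter_upwards [ae_restrict_of_ae hgae, ae_restrict_mem measurableSet_Ioo]
          with x hx hxm
        exact ((hx hxm).2).symm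
      exact h2
  -- primitives on both sides of x0
  have hIocInt : ∀ p q, 0 ≤ p → q ≤ 1 → IntegrableOn (deriv F) (Ioc p q) :=
    hIntOn _ hDFint
  set ρ : ℝ → ℝ := fun t => ∫ x in Ioc x0 t, deriv F x with hρdef
  have hρcont : ContinuousOn ρ (Icc x0 1) := by
    apply intervalIntegral.continuousOn_primitive
    have h1 := hIocInt x0 1 hx00.le le_rfl
    rwa [IntegrableOn, Measure.restrict_congr_set Ioc_ae_eq_Icc] at h1
  have hρ0 : ρ x0 = 0 := by rw [hρdef]; simp
  have haddIoc : ∀ t, x0 ≤ t → t ≤ 1 → ρ 1 = ρ t + ∫ x in Ioc t 1, deriv F x := by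
    intro t ht h1
    rw [hρdef]
    simp only
    rw [← setIntegral_union (Ioc_disjoint_Ioc_of_le le_rfl) measurableSet_Ioc
      (hIocInt x0 t hx00.le (h1)) (hIocInt t 1 (hx00.le.trans ht) le_rfl),
      Ioc_union_Ioc_eq_Ioc ht h1]
  have hFt : ∀ t, x0 < t → t ≤ 1 → F t = (F 1 - ρ 1) + ρ t := by
    intro t ht h1
    have h2 := hFTCside t 1 (hx00.le.trans ht.le) h1 le_rfl
      (fun hc => absurd hc.1 (not_le.2 ht))
    have h3 := haddIoc t ht.le h1
    linarith
  have hρtendR : Tendsto ρ (𝓝[>] x0) (𝓝 0) := by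
    have h1 : ContinuousWithinAt ρ (Icc x0 1) x0 := hρcont x0 (left_mem_Icc.2 hx01.le)
    have h2 : Tendsto ρ (𝓝[Icc x0 1] x0) (𝓝 0) := by
      rw [← hρ0]; exact h1
    have h3 : Tendsto ρ (𝓝[Ioc x0 1] x0) (𝓝 0) :=
      h2.mono_left (nhdsWithin_mono _ Ioc_subset_Icc_self)
    rwa [nhdsWithin_Ioc_eq_nhdsGT hx01] at h3
  set lR : ℝ := F 1 - ρ 1 with hlRdef
  have hFtendR : Tendsto F (𝓝[>] x0) (𝓝 lR) := by
    have h1 : Tendsto (fun t => lR + ρ t) (𝓝[>] x0) (𝓝 (lR + 0)) :=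
      tendsto_const_nhds.add hρtendR
    rw [add_zero] at h1
    apply Tendsto.congr' _ h1
    filter_upwards [Ioc_mem_nhdsGT_of_mem (⟨le_rfl, hx01⟩ : x0 ∈ Ico x0 1)] with t ht
    exact (hFt t ht.1 ht.2).symm
  have husq : Integrable (fun x => u x ^ 2) (volume.restrict (Ioo (0:ℝ) 1)) :=
    hu2.integrable_sq
  have hlR0 : lR = 0 := by
    by_contra hne
    have habsl : 0 < |lR| := abs_pos.2 hne
    have h2 : Tendsto (fun t => |F t|) (𝓝[>] x0) (𝓝 |lR|) := hFtendR.abs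
    have h3 : ∀ᶠ t in 𝓝[>] x0, |lR|/2 < |F t| := by
      have h4 := Metric.tendsto_nhds.mp h2 (|lR|/2) (by linarith)
      filter_upwards [h4] with t hdist
      rw [Real.dist_eq, abs_sub_lt_iff] at hdist
      linarith [hdist.2]
    obtain ⟨b, hb, hsub⟩ := mem_nhdsGT_iff_exists_Ioo_subset.1 h3
    set b' := min b 1 with hb'def
    have hx0b' : x0 < b' := lt_min hb hx01
    have hint : IntegrableOn (fun x => u x ^ 2) (Ioo x0 b') :=
      husq.mono_measure (Measure.restrict_mono
        (Ioo_subset_Ioo hx00.le (min_le_right _ _)) le_rfl)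
    have hCpos : 0 < |lR| / (2 * L) := by positivity
    apply blowup_right hx0b' hCpos hint
    intro t ht
    have htb : t ∈ Ioo x0 b := ⟨ht.1, lt_of_lt_of_le ht.2 (min_le_left _ _)⟩
    have hFt2 : |lR|/2 < |F t| := hsub htb
    have htIcc : t ∈ Icc (0:ℝ) 1 := ⟨hx00.le.trans ht.1.le, ht.2.le.trans (min_le_right _ _)⟩
    have htp : 0 < t - x0 := by linarith [ht.1]
    have hFa : |F t| ≤ L * (t - x0) * |u t| := by
      calc |F t| = |a t| * |u t| := abs_mul _ _
        _ ≤ (L * |t - x0|) * |u t| :=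
            mul_le_mul_of_nonneg_right (habs t htIcc) (abs_nonneg _)
        _ = L * (t - x0) * |u t| := by rw [abs_of_pos htp]
    rw [div_div, div_le_iff₀ (by positivity)]
    nlinarith
  -- left side
  set σ2 : ℝ → ℝ := fun t => ∫ x in Ioc 0 t, deriv F x with hσdef
  have hσcont : ContinuousOn σ2 (Icc 0 x0) := by
    apply intervalIntegral.continuousOn_primitive
    have h1 := hIocInt 0 x0 le_rfl hx01.le
    rwa [IntegrableOn, Measure.restrict_congr_set Ioc_ae_eq_Icc] at h1
  have hF0 : F 0 = 0 := by rw [hFdef]; simp [hu0]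
  have hFq : ∀ q, 0 ≤ q → q < x0 → F q = σ2 q := by
    intro q h0 hq
    have h2 := hFTCside 0 q le_rfl h0 (by linarith) (fun hc => absurd hc.2 (not_le.2 hq))
    rw [hF0] at h2
    rw [hσdef]; linarith
  have hFtendL : Tendsto F (𝓝[<] x0) (𝓝 (σ2 x0)) := by
    have h1 : ContinuousWithinAt σ2 (Icc 0 x0) x0 := hσcont x0 (right_mem_Icc.2 hx00.le)
    have h2 : Tendsto σ2 (𝓝[Ico 0 x0] x0) (𝓝 (σ2 x0)) :=
      h1.mono_left (nhdsWithin_mono _ Ico_subset_Icc_self)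
    have h3 : Tendsto F (𝓝[Ico 0 x0] x0) (𝓝 (σ2 x0)) := by
      apply Tendsto.congr' _ h2
      filter_upwards [self_mem_nhdsWithin] with t ht
      exact (hFq t ht.1 ht.2).symm
    rwa [nhdsWithin_Ico_eq_nhdsLT hx00] at h3
  have hlL0 : σ2 x0 = 0 := by
    by_contra hne
    have habsl : 0 < |σ2 x0| := abs_pos.2 hne
    have h2 : Tendsto (fun t => |F t|) (𝓝[<] x0) (𝓝 |σ2 x0|) := hFtendL.abs
    have h3 : ∀ᶠ t in 𝓝[<] x0, |σ2 x0|/2 < |F t| := by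
      have h4 := Metric.tendsto_nhds.mp h2 (|σ2 x0|/2) (by linarith)
      filter_upwards [h4] with t hdist
      rw [Real.dist_eq, abs_sub_lt_iff] at hdist
      linarith [hdist.2]
    obtain ⟨b, hb, hsub⟩ := mem_nhdsLT_iff_exists_Ioo_subset.1 h3
    set b' := max b 0 with hb'def
    have hx0b' : b' < x0 := max_lt hb hx00
    have hint : IntegrableOn (fun x => u x ^ 2) (Ioo b' x0) :=
      husq.mono_measure (Measure.restrict_mono
        (Ioo_subset_Ioo (le_max_right _ _) hx01.le) le_rfl)
    have hCpos : 0 < |σ2 x0| / (2 * L) := by positivity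
    apply blowup_left hx0b' hCpos hint
    intro t ht
    have htb : t ∈ Ioo b x0 := ⟨lt_of_le_of_lt (le_max_left _ _) ht.1, ht.2⟩
    have hFt2 : |σ2 x0|/2 < |F t| := hsub htb
    have htIcc : t ∈ Icc (0:ℝ) 1 := ⟨(le_max_right b 0).trans ht.1.le, (ht.2.le.trans hx01.le)⟩
    have htp : 0 < x0 - t := by linarith [ht.2]
    have hFa : |F t| ≤ L * (x0 - t) * |u t| := by
      calc |F t| = |a t| * |u t| := abs_mul _ _
        _ ≤ (L * |t - x0|) * |u t| :=
            mul_le_mul_of_nonneg_right (habs t htIcc) (abs_nonneg _)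
        _ = L * (x0 - t) * |u t| := by
            rw [abs_sub_comm, abs_of_pos htp]
    rw [div_div, div_le_iff₀ (by positivity)]
    nlinarith
  have hFtend0 : Tendsto F (nhdsWithin x0 {x0}ᶜ) (𝓝 0) := by
    have hLt : Tendsto F (𝓝[<] x0) (𝓝 0) := by rw [← hlL0]; exact hFtendL
    have hRt : Tendsto F (𝓝[>] x0) (𝓝 0) := by rw [← hlR0]; exact hFtendR
    have hcompl : ({x0}ᶜ : Set ℝ) = Iio x0 ∪ Ioi x0 := (Iio_union_Ioi).symm
    rw [hcompl, nhdsWithin_union, tendsto_sup]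
    exact ⟨hLt, hRt⟩
  -- F equals its primitives on each side (including the endpoint x0)
  have hFx0 : F x0 = 0 := by rw [hFdef]; simp [ha.a_zero]
  have hFσ : ∀ q ∈ Icc (0:ℝ) x0, F q = σ2 q := by
    intro q hq
    rcases eq_or_lt_of_le hq.2 with rfl | hlt
    · rw [hFx0, hlL0]
    · exact hFq q hq.1 hlt
  have hFρ : ∀ q ∈ Icc x0 (1:ℝ), F q = ρ q := by
    intro q hq
    rcases eq_or_lt_of_le hq.1 with h | hlt
    · rw [← h, hFx0, hρ0]
    · have h5 := hFt q hlt hq.2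
      have h6 : lR = F 1 - ρ 1 := hlRdef
      linarith
  -- the master inequality
  have hGIoc : ∀ p q, 0 ≤ p → q ≤ 1 → IntegrableOn G (Ioc p q) := hIntOn _ hGint
  have hne1_ae : ∀ᵐ x : ℝ, x ≠ (1:ℝ) := by
    rw [ae_iff]
    simp only [ne_eq, not_not, setOf_eq_eq_singleton]
    exact measure_singleton 1
  have hbae : ∀ p q, 0 ≤ p → q ≤ 1 →
      ∀ᵐ x ∂(volume.restrict (Ioc p q)), ‖deriv F x‖ ≤ G x := by
    intro p q hp hq
    filter_upwards [ae_restrict_mem measurableSet_Ioc, ae_restrict_of_ae hne_ae,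
      ae_restrict_of_ae hne1_ae] with x hx hxne hx1
    have hxIoo : x ∈ Ioo (0:ℝ) 1 := ⟨lt_of_le_of_lt hp hx.1, lt_of_le_of_ne (hx.2.trans hq) hx1⟩
    rw [Real.norm_eq_abs]
    exact hPB x hxIoo hxne
  have hseg : ∀ p q, 0 ≤ p → p ≤ q → q ≤ 1 → (q ≤ x0 ∨ x0 ≤ p) →
      |F q - F p| ≤ ∫ x in Ioc p q, G x := by
    have base : ∀ p q, 0 ≤ p → p ≤ q → q ≤ 1 →
        F q - F p = ∫ x in Ioc p q, deriv F x →
        |F q - F p| ≤ ∫ x in Ioc p q, G x := by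
      intro p q hp hpq hq heq
      rw [heq, ← Real.norm_eq_abs]
      exact norm_integral_le_of_norm_le (hGIoc p q hp hq) (hbae p q hp hq)
    intro p q hp hpq hq hside
    apply base p q hp hpq hq
    rcases hside with hqx | hxp
    · rw [hFσ q ⟨hp.trans hpq, hqx⟩, hFσ p ⟨hp, hpq.trans hqx⟩, hσdef]
      simp only
      have h8 := setIntegral_union (Ioc_disjoint_Ioc_of_le (a := (0:ℝ)) (b := p) (d := q) le_rfl)
        measurableSet_Ioc (hIocInt 0 p le_rfl (hpq.trans hq)) (hIocInt p q hp hq)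
      rw [Ioc_union_Ioc_eq_Ioc hp hpq] at h8
      linarith
    · rw [hFρ q ⟨hxp.trans hpq, hq⟩, hFρ p ⟨hxp, hpq.trans hq⟩, hρdef]
      simp only
      have h8 := setIntegral_union (Ioc_disjoint_Ioc_of_le (a := x0) (b := p) (d := q) le_rfl)
        measurableSet_Ioc (hIocInt x0 p hx00.le (hpq.trans hq)) (hIocInt p q hp hq)
      rw [Ioc_union_Ioc_eq_Ioc hxp hpq] at h8
      linarith
  have hstar : ∀ p q, 0 ≤ p → p ≤ q → q ≤ 1 → |F q - F p| ≤ ∫ x in Ioc p q, G x := by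
    intro p q hp hpq hq
    rcases le_total q x0 with hqx | hxq
    · exact hseg p q hp hpq hq (Or.inl hqx)
    rcases le_total x0 p with hxp | hpx
    · exact hseg p q hp hpq hq (Or.inr hxp)
    · have h1 := hseg p x0 hp hpx hx01.le (Or.inl le_rfl)
      have h2 := hseg x0 q hx00.le hxq hq (Or.inr le_rfl)
      have hGsplit : ∫ x in Ioc p q, G x
          = (∫ x in Ioc p x0, G x) + ∫ x in Ioc x0 q, G x := by
        rw [← setIntegral_union (Ioc_disjoint_Ioc_of_le le_rfl) measurableSet_Ioc
          (hGIoc p x0 hp hx01.le) (hGIoc x0 q hx00.le hq),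
          Ioc_union_Ioc_eq_Ioc hpx hxq]
      calc |F q - F p| ≤ |F q - F x0| + |F x0 - F p| := by
            have h6 : F q - F p = (F q - F x0) + (F x0 - F p) := by ring
            rw [h6]; exact abs_add_le _ _
        _ ≤ (∫ x in Ioc x0 q, G x) + ∫ x in Ioc p x0, G x := add_le_add h2 h1
        _ = ∫ x in Ioc p q, G x := by rw [hGsplit]; ring
  -- absolute continuity of F on [0,1]
  have hACF : ACOn F 0 1 := by
    intro ε hε
    have hlint : ∫⁻ x, ENNReal.ofReal (G x) ∂(volume.restrict (Ioo (0:ℝ) 1)) ≠ ⊤ :=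
      hGint.lintegral_lt_top.ne
    obtain ⟨δ₀, hδ₀pos, Hδ₀⟩ := exists_pos_setLIntegral_lt_of_measure_lt hlint
      (ε := ENNReal.ofReal ε) (ENNReal.ofReal_pos.2 hε).ne'
    obtain ⟨δr, hδr0, hδrlt⟩ : ∃ δr : ℝ, 0 < δr ∧ ENNReal.ofReal δr < δ₀ := by
      rcases eq_or_ne δ₀ ⊤ with rfl | hfin
      · exact ⟨1, one_pos, by simp⟩
      · have hpos : 0 < δ₀.toReal := ENNReal.toReal_pos hδ₀pos.ne' hfin
        refine ⟨δ₀.toReal/2, by positivity, ?_⟩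
        rw [ENNReal.ofReal_lt_iff_lt_toReal (by positivity) hfin]
        linarith
    refine ⟨δr, hδr0, fun n cc dd h1 h2 h3 => ?_⟩
    set S := ⋃ i, Ioo (cc i) (dd i) with hSdef
    have hSsub : S ⊆ Ioo (0:ℝ) 1 :=
      iUnion_subset (fun i => Ioo_subset_Ioo (h1 i).1 (h1 i).2.2)
    have hSmeas : MeasurableSet S := MeasurableSet.iUnion (fun i => measurableSet_Ioo)
    have hSvol : (volume.restrict (Ioo (0:ℝ) 1)) S < δ₀ := by
      calc (volume.restrict (Ioo (0:ℝ) 1)) S ≤ volume S := by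
            rw [Measure.restrict_apply hSmeas]; exact measure_mono inter_subset_left
        _ ≤ ∑' i, volume (Ioo (cc i) (dd i)) := measure_iUnion_le _
        _ = ∑ i, volume (Ioo (cc i) (dd i)) := tsum_fintype _
        _ = ∑ i, ENNReal.ofReal (dd i - cc i) := by simp [Real.volume_Ioo]
        _ = ENNReal.ofReal (∑ i, (dd i - cc i)) :=
            (ENNReal.ofReal_sum_of_nonneg (fun i _ => sub_nonneg.2 (h1 i).2.1)).symm
        _ < ENNReal.ofReal δr := (ENNReal.ofReal_lt_ofReal_iff hδr0).2 h3
        _ < δ₀ := hδrlt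
    have hkey := Hδ₀ S hSvol
    have hIoo_int : ∀ i : Fin n, IntegrableOn G (Ioo (cc i) (dd i)) := fun i =>
      (hGIoc (cc i) (dd i) (h1 i).1 (h1 i).2.2).mono_set Ioo_subset_Ioc_self
    have hsum2 : ∀ i : Fin n, ∫ x in Ioc (cc i) (dd i), G x
        = ∫ x in Ioo (cc i) (dd i), G x := fun i => by
      rw [← Measure.restrict_congr_set Ioo_ae_eq_Ioc]
    have hsum3 : ∑ i, ∫ x in Ioo (cc i) (dd i), G x = ∫ x in S, G x := by
      have h7 := MeasureTheory.integral_biUnion_finset (μ := volume) (f := G) Finset.univ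
        (fun i _ => measurableSet_Ioo)
        (fun i _ j _ hij => by
          rw [Function.onFun, Set.disjoint_iff_inter_eq_empty]
          exact h2 i j hij)
        (fun i _ => hIoo_int i)
      rw [hSdef, show (⋃ i, Ioo (cc i) (dd i)) = ⋃ i ∈ Finset.univ, Ioo (cc i) (dd i) by simp]
      exact h7.symm
    have hSG : ∫ x in S, G x < ε := by
      have hrr : (volume.restrict (Ioo (0:ℝ) 1)).restrict S = volume.restrict S := by
        rw [Measure.restrict_restrict hSmeas, inter_eq_self_of_subset_left hSsub]
      have hGr : ∫ x in S, G x
          = (∫⁻ x in S, ENNReal.ofReal (G x) ∂(volume.restrict (Ioo (0:ℝ) 1))).toReal := by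
        rw [← hrr, integral_eq_lintegral_of_nonneg_ae
          (Filter.Eventually.of_forall hG0) (hGint.aestronglyMeasurable.restrict)]
      rw [hGr]
      exact ENNReal.toReal_lt_of_lt_ofReal hkey
    calc ∑ i, |F (dd i) - F (cc i)|
        ≤ ∑ i, ∫ x in Ioc (cc i) (dd i), G x :=
          Finset.sum_le_sum (fun i _ => hstar (cc i) (dd i) (h1 i).1 (h1 i).2.1 (h1 i).2.2)
      _ = ∑ i, ∫ x in Ioo (cc i) (dd i), G x := Finset.sum_congr rfl (fun i _ => hsum2 i)
      _ = ∫ x in S, G x := hsum3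
      _ < ε := hSG
  exact ⟨hACF, hFmem2, hDF2, hFtend0⟩

end Main
/-- Proposition 2.2: in the strongly degenerate case, `H¹_a(0,1)` coincides with the set `X`
of `u ∈ L²(0,1)`, locally absolutely continuous on `[0,1] \ {x0}`, with `√a u' ∈ L²(0,1)`,
`a u ∈ H¹₀(0,1)`, `a u` extending continuously to `x0` with value `0`, and `u(0)=u(1)=0`.
In particular, `a(x)u(x) → 0` as `x → x0` for every `u ∈ H¹_a(0,1)`. -/
theorem H1a_characterization_SD (a : ℝ → ℝ) (x0 K : ℝ)
    (ha : StronglyDegenerate a x0 K) :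
    (∀ u : ℝ → ℝ,
      MemH1a a x0 False u ↔
        (MemLp u 2 (volume.restrict (Set.Ioo (0:ℝ) 1)) ∧
         LocACOff u x0 ∧
         MemLp (fun x => Real.sqrt (a x) * deriv u x) 2 (volume.restrict (Set.Ioo (0:ℝ) 1)) ∧
         ACOn (fun x => a x * u x) 0 1 ∧
         MemLp (fun x => a x * u x) 2 (volume.restrict (Set.Ioo (0:ℝ) 1)) ∧
         MemLp (deriv (fun x => a x * u x)) 2 (volume.restrict (Set.Ioo (0:ℝ) 1)) ∧
         a 0 * u 0 = 0 ∧ a 1 * u 1 = 0 ∧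
         Filter.Tendsto (fun x => a x * u x) (nhdsWithin x0 {x0}ᶜ) (nhds 0) ∧
         u 0 = 0 ∧ u 1 = 0)) ∧
    (∀ u : ℝ → ℝ, MemH1a a x0 False u →
      Filter.Tendsto (fun x => a x * u x) (nhdsWithin x0 {x0}ᶜ) (nhds 0)) := by
  constructor
  · intro u
    constructor
    · rintro ⟨-, hu2, hloc, hau', hu0, hu1⟩
      obtain ⟨hAC, hmem2, hdmem2, htend⟩ := fwd_main ha u hu2 hloc hau' hu0 hu1
      exact ⟨hu2, hloc, hau', hAC, hmem2, hdmem2, by rw [hu0, mul_zero],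
        by rw [hu1, mul_zero], htend, hu0, hu1⟩
    · rintro ⟨hu2, hloc, hau', -, -, -, -, -, -, hu0, hu1⟩
      exact ⟨fun h => h.elim, hu2, hloc, hau', hu0, hu1⟩
  · rintro u ⟨-, hu2, hloc, hau', hu0, hu1⟩
    exact (fwd_main ha u hu2 hloc hau' hu0 hu1).2.2.2
end
end

section
/- Assume Hypothesis 3.1 and let w ∈ V satisfy w(t,0)=w(t,1)=0 for t ∈ (0,T) and w(0⁺,x)=w(T⁻,x)=0 for x ∈ (0,1). Then the boundary terms ∫₀ᵀ[a w_x w_t]_{x=0}^{x=1} dt − (s/2)∫₀¹[w²φ_t]_{t=0}^{t=T} dx + (s²/2)∫₀¹[a φ_x² w²]_{t=0}^{t=T} dx + ∫₀ᵀ[−sφ_x (a w_x)² + s² a φ_t φ_x w² − s³ a² φ_x³ w²]_{x=0}^{x=1} dt + ∫₀ᵀ[−s a (aφ_x)_x w w_x]_{x=0}^{x=1} dt − (1/2)∫₀¹[a w_x²]_{t=0}^{t=T} dx reduce exactly to −s ∫₀ᵀ [ Θ (a w_x)² ψ′ ]_{x=0}^{x=1} dt. -/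
open MeasureTheory Set Filter

noncomputable section

/-- The distributed terms of `⟨L⁺_s w, L⁻_s w⟩` in Lemma 3.2. -/
def DistTerms (a : ℝ → ℝ) (φ : ℝ → ℝ → ℝ) (s T : ℝ) (w : ℝ → ℝ → ℝ) : ℝ :=
  s / 2 * (∫ t in Set.Ioo (0:ℝ) T, ∫ x in Set.Ioo (0:ℝ) 1,
      ptd (ptd φ) t x * (w t x) ^ 2)
  + s ^ 3 * (∫ t in Set.Ioo (0:ℝ) T, ∫ x in Set.Ioo (0:ℝ) 1,
      (2 * a x * pxd (pxd φ) t x + deriv a x * pxd φ t x)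
        * a x * (pxd φ t x) ^ 2 * (w t x) ^ 2)
  - 2 * s ^ 2 * (∫ t in Set.Ioo (0:ℝ) T, ∫ x in Set.Ioo (0:ℝ) 1,
      a x * pxd φ t x * pxd (ptd φ) t x * (w t x) ^ 2)
  + s * (∫ t in Set.Ioo (0:ℝ) T, ∫ x in Set.Ioo (0:ℝ) 1,
      (2 * (a x) ^ 2 * pxd (pxd φ) t x + a x * deriv a x * pxd φ t x) * (pxd w t x) ^ 2)

/-- The boundary terms of `⟨L⁺_s w, L⁻_s w⟩` in Lemma 3.2. -/
def BdryTerms (a : ℝ → ℝ) (φ : ℝ → ℝ → ℝ) (s T : ℝ) (w : ℝ → ℝ → ℝ) : ℝ :=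
  (∫ t in Set.Ioo (0:ℝ) T,
    (a 1 * pxd w t 1 * ptd w t 1 - a 0 * pxd w t 0 * ptd w t 0))
  - s / 2 * (∫ x in Set.Ioo (0:ℝ) 1,
      ((w T x) ^ 2 * ptd φ T x - (w 0 x) ^ 2 * ptd φ 0 x))
  + s ^ 2 / 2 * (∫ x in Set.Ioo (0:ℝ) 1,
      (a x * (pxd φ T x) ^ 2 * (w T x) ^ 2 - a x * (pxd φ 0 x) ^ 2 * (w 0 x) ^ 2))
  + (∫ t in Set.Ioo (0:ℝ) T,
      ((-s * pxd φ t 1 * (a 1 * pxd w t 1) ^ 2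
          + s ^ 2 * a 1 * ptd φ t 1 * pxd φ t 1 * (w t 1) ^ 2
          - s ^ 3 * (a 1) ^ 2 * (pxd φ t 1) ^ 3 * (w t 1) ^ 2)
        - (-s * pxd φ t 0 * (a 0 * pxd w t 0) ^ 2
          + s ^ 2 * a 0 * ptd φ t 0 * pxd φ t 0 * (w t 0) ^ 2
          - s ^ 3 * (a 0) ^ 2 * (pxd φ t 0) ^ 3 * (w t 0) ^ 2)))
  + (∫ t in Set.Ioo (0:ℝ) T,
      ((-s * a 1 * pxd (fun τ y => a y * pxd φ τ y) t 1 * w t 1 * pxd w t 1)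
        - (-s * a 0 * pxd (fun τ y => a y * pxd φ τ y) t 0 * w t 0 * pxd w t 0)))
  - 1 / 2 * (∫ x in Set.Ioo (0:ℝ) 1,
      (a x * (pxd w T x) ^ 2 - a x * (pxd w 0 x) ^ 2))

/-- Lemma 3.4: the boundary terms reduce to `-s ∫₀ᵀ [Θ (a w_x)² ψ']_{x=0}^{x=1} dt`. -/
theorem boundary_terms_reduce (a : ℝ → ℝ) (x0 K θ T c1 c2 s : ℝ)
    (hyp : Hyp31 a x0 K θ) (hT : 0 < T) (hc1 : 0 < c1)
    (hc2 : c2 > max ((1 - x0) ^ 2 / ((2 - K) * a 1)) (x0 ^ 2 / ((2 - K) * a 0)))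
    (hs : 0 < s) (w : ℝ → ℝ → ℝ)
    (hw : MemV a x0 (WeaklyDegenerate a x0 K) T w)
    (hbc : ∀ t ∈ Set.Ioo (0:ℝ) T, w t 0 = 0 ∧ w t 1 = 0)
    (hw0T : ∀ x ∈ Set.Ioo (0:ℝ) 1, w 0 x = 0 ∧ w T x = 0) :
    BdryTerms a (phiC a x0 T c1 c2) s T w
      = -s * ∫ t in Set.Ioo (0:ℝ) T,
          (Theta T t * (a 1 * pxd w t 1) ^ 2 * deriv (psiC a x0 c1 c2) 1
            - Theta T t * (a 0 * pxd w t 0) ^ 2 * deriv (psiC a x0 c1 c2) 0) := by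
  classical
  -- pointwise vanishing facts on the time boundary lines x = 0, 1
  have hptd0 : ∀ t ∈ Set.Ioo (0:ℝ) T, ptd w t 0 = 0 := by
    intro t ht
    have h : (fun τ => w τ 0) =ᶠ[nhds t] (fun _ => (0:ℝ)) := by
      filter_upwards [isOpen_Ioo.mem_nhds ht] with τ hτ using (hbc τ hτ).1
    simp only [ptd]
    rw [h.deriv_eq, deriv_const]
  have hptd1 : ∀ t ∈ Set.Ioo (0:ℝ) T, ptd w t 1 = 0 := by
    intro t ht
    have h : (fun τ => w τ 1) =ᶠ[nhds t] (fun _ => (0:ℝ)) := by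
      filter_upwards [isOpen_Ioo.mem_nhds ht] with τ hτ using (hbc τ hτ).2
    simp only [ptd]
    rw [h.deriv_eq, deriv_const]
  have hpxdT : ∀ x ∈ Set.Ioo (0:ℝ) 1, pxd w T x = 0 := by
    intro x hx
    have h : (fun y => w T y) =ᶠ[nhds x] (fun _ => (0:ℝ)) := by
      filter_upwards [isOpen_Ioo.mem_nhds hx] with y hy using (hw0T y hy).2
    simp only [pxd]
    rw [h.deriv_eq, deriv_const]
  have hpxd0 : ∀ x ∈ Set.Ioo (0:ℝ) 1, pxd w 0 x = 0 := by
    intro x hx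
    have h : (fun y => w 0 y) =ᶠ[nhds x] (fun _ => (0:ℝ)) := by
      filter_upwards [isOpen_Ioo.mem_nhds hx] with y hy using (hw0T y hy).1
    simp only [pxd]
    rw [h.deriv_eq, deriv_const]
  have hpxphi : ∀ t x, pxd (phiC a x0 T c1 c2) t x
      = Theta T t * deriv (psiC a x0 c1 c2) x := by
    intro t x
    simp only [pxd, phiC]
    exact deriv_const_mul_field _
  -- each vanishing integral
  have I1 : (∫ t in Set.Ioo (0:ℝ) T,
      (a 1 * pxd w t 1 * ptd w t 1 - a 0 * pxd w t 0 * ptd w t 0)) = 0 := by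
    rw [setIntegral_congr_fun (g := fun _ => (0:ℝ)) measurableSet_Ioo
      (fun t ht => by simp [hptd0 t ht, hptd1 t ht]), integral_zero]
  have I2 : (∫ x in Set.Ioo (0:ℝ) 1,
      ((w T x) ^ 2 * ptd (phiC a x0 T c1 c2) T x
        - (w 0 x) ^ 2 * ptd (phiC a x0 T c1 c2) 0 x)) = 0 := by
    rw [setIntegral_congr_fun (g := fun _ => (0:ℝ)) measurableSet_Ioo
      (fun x hx => by simp [(hw0T x hx).1, (hw0T x hx).2]), integral_zero]
  have I3 : (∫ x in Set.Ioo (0:ℝ) 1,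
      (a x * (pxd (phiC a x0 T c1 c2) T x) ^ 2 * (w T x) ^ 2
        - a x * (pxd (phiC a x0 T c1 c2) 0 x) ^ 2 * (w 0 x) ^ 2)) = 0 := by
    rw [setIntegral_congr_fun (g := fun _ => (0:ℝ)) measurableSet_Ioo
      (fun x hx => by simp [(hw0T x hx).1, (hw0T x hx).2]), integral_zero]
  have I5 : (∫ t in Set.Ioo (0:ℝ) T,
      ((-s * a 1 * pxd (fun τ y => a y * pxd (phiC a x0 T c1 c2) τ y) t 1 * w t 1 * pxd w t 1)
        - (-s * a 0 * pxd (fun τ y => a y * pxd (phiC a x0 T c1 c2) τ y) t 0 * w t 0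
            * pxd w t 0))) = 0 := by
    rw [setIntegral_congr_fun (g := fun _ => (0:ℝ)) measurableSet_Ioo
      (fun t ht => by simp [(hbc t ht).1, (hbc t ht).2]), integral_zero]
  have I6 : (∫ x in Set.Ioo (0:ℝ) 1,
      (a x * (pxd w T x) ^ 2 - a x * (pxd w 0 x) ^ 2)) = 0 := by
    rw [setIntegral_congr_fun (g := fun _ => (0:ℝ)) measurableSet_Ioo
      (fun x hx => by simp [hpxdT x hx, hpxd0 x hx]), integral_zero]
  have I4 : (∫ t in Set.Ioo (0:ℝ) T,
      ((-s * pxd (phiC a x0 T c1 c2) t 1 * (a 1 * pxd w t 1) ^ 2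
          + s ^ 2 * a 1 * ptd (phiC a x0 T c1 c2) t 1 * pxd (phiC a x0 T c1 c2) t 1
              * (w t 1) ^ 2
          - s ^ 3 * (a 1) ^ 2 * (pxd (phiC a x0 T c1 c2) t 1) ^ 3 * (w t 1) ^ 2)
        - (-s * pxd (phiC a x0 T c1 c2) t 0 * (a 0 * pxd w t 0) ^ 2
          + s ^ 2 * a 0 * ptd (phiC a x0 T c1 c2) t 0 * pxd (phiC a x0 T c1 c2) t 0
              * (w t 0) ^ 2
          - s ^ 3 * (a 0) ^ 2 * (pxd (phiC a x0 T c1 c2) t 0) ^ 3 * (w t 0) ^ 2)))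
      = -s * ∫ t in Set.Ioo (0:ℝ) T,
          (Theta T t * (a 1 * pxd w t 1) ^ 2 * deriv (psiC a x0 c1 c2) 1
            - Theta T t * (a 0 * pxd w t 0) ^ 2 * deriv (psiC a x0 c1 c2) 0) := by
    rw [← MeasureTheory.integral_const_mul]
    apply setIntegral_congr_fun measurableSet_Ioo
    intro t ht
    simp only [hpxphi, (hbc t ht).1, (hbc t ht).2]
    ring
  unfold BdryTerms
  rw [I1, I2, I3, I4, I5, I6]
  ring
end
end

section
/- Assume a satisfies the weakly degenerate (WD) or strongly degenerate (SD) hypothesis with degeneracy point x0 and constant K ∈ (0,2), let c1 > 0 and c2 > max{(1−x0)²/((2−K)a(1)), x0²/((2−K)a(0))}, and set ψ(x) := c1[∫_{x0}^x (y−x0)/a(y) dy − c2]. Then −c1 c2 ≤ ψ(x) < 0 for every x ∈ [0,1]; in particular, for x > x0, ψ(x) ≤ c1[ (1−x0)²/((2−K)a(1)) − c2 ] < 0. -/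
open MeasureTheory Set Filter

noncomputable section

open intervalIntegral in
private lemma psi_int_aux (a : ℝ → ℝ) (x0 K : ℝ)
    (hx01 : 0 < x0) (hx02 : x0 < 1) (ha00 : a x0 = 0)
    (hpos : ∀ x ∈ Set.Icc (0:ℝ) 1, x ≠ x0 → 0 < a x)
    (hdiff : ∀ x ∈ Set.Icc (0:ℝ) 1, x ≠ x0 → DifferentiableAt ℝ a x)
    (hK0 : 0 < K) (hK2 : K < 2)
    (hineq : ∀ x ∈ Set.Icc (0:ℝ) 1, x ≠ x0 → (x - x0) * deriv a x ≤ K * a x) :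
    ∀ x ∈ Set.Icc (0:ℝ) 1,
      0 ≤ (∫ y in x0..x, (y - x0) / a y) ∧
      (x0 ≤ x → (∫ y in x0..x, (y - x0) / a y) ≤ (1 - x0)^2 / ((2-K) * a 1)) ∧
      (x ≤ x0 → (∫ y in x0..x, (y - x0) / a y) ≤ x0^2 / ((2-K) * a 0)) := by
  have ha1 : 0 < a 1 := hpos 1 ⟨by linarith, le_refl 1⟩ (ne_of_gt hx02)
  have ha0 : 0 < a 0 := hpos 0 ⟨le_refl 0, by linarith⟩ (ne_of_lt hx01)
  have hp : (-1:ℝ) < 1 - K := by linarith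
  have hp1 : (0:ℝ) < (1 - K) + 1 := by linarith
  -- monotonicity on the right of x0
  have monoR : ∀ y, x0 < y → y ≤ 1 → a 1 / (1 - x0) ^ (K:ℝ) ≤ a y / (y - x0) ^ (K:ℝ) := by
    intro y hy hy1
    set F : ℝ → ℝ := fun z => a z * (z - x0) ^ (-K:ℝ) with hFdef
    have hD : ∀ z, x0 < z → z ≤ 1 →
        HasDerivAt F (deriv a z * (z - x0) ^ (-K:ℝ)
          + a z * (1 * (-K) * (z - x0) ^ (-K - 1:ℝ))) z := by
      intro z hz0 hz1
      have hzpos : (0:ℝ) < z - x0 := sub_pos.mpr hz0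
      have hda : HasDerivAt a (deriv a z) z :=
        (hdiff z ⟨by linarith, hz1⟩ (ne_of_gt hz0)).hasDerivAt
      have hpow : HasDerivAt (fun w => (w - x0) ^ (-K:ℝ))
          (1 * (-K) * (z - x0) ^ (-K - 1:ℝ)) z :=
        ((hasDerivAt_id z).sub_const x0).rpow_const (Or.inl (ne_of_gt hzpos))
      exact hda.mul hpow
    have hant : AntitoneOn F (Set.Icc y 1) := by
      apply antitoneOn_of_deriv_nonpos (convex_Icc y 1)
      · intro z hz
        exact (hD z (lt_of_lt_of_le hy hz.1) hz.2).continuousAt.continuousWithinAt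
      · rw [interior_Icc]
        intro z hz
        exact (hD z (lt_trans hy hz.1) (le_of_lt hz.2)).differentiableAt.differentiableWithinAt
      · rw [interior_Icc]
        intro z hz
        have hz0 : x0 < z := lt_trans hy hz.1
        have hzpos : (0:ℝ) < z - x0 := sub_pos.mpr hz0
        rw [(hD z hz0 (le_of_lt hz.2)).deriv]
        have hsplit : (z - x0) ^ (-K:ℝ) = (z - x0) * (z - x0) ^ (-K - 1:ℝ) := by
          have h := Real.rpow_add hzpos 1 (-K - 1)
          rw [show (1:ℝ) + (-K - 1) = -K by ring, Real.rpow_one] at h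
          exact h
        rw [hsplit]
        have hring : deriv a z * ((z - x0) * (z - x0) ^ (-K - 1:ℝ))
            + a z * (1 * -K * (z - x0) ^ (-K - 1:ℝ))
            = ((z - x0) * deriv a z - K * a z) * (z - x0) ^ (-K - 1:ℝ) := by ring
        rw [hring]
        exact mul_nonpos_of_nonpos_of_nonneg
          (sub_nonpos.mpr (hineq z ⟨by linarith, le_of_lt hz.2⟩ (ne_of_gt hz0)))
          (Real.rpow_nonneg (le_of_lt hzpos) _)
    have h1 := hant ⟨le_refl y, hy1⟩ ⟨hy1, le_refl 1⟩ hy1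
    have hy0 : (0:ℝ) < y - x0 := sub_pos.mpr hy
    have h10 : (0:ℝ) < 1 - x0 := by linarith
    rw [hFdef] at h1
    simp only [Real.rpow_neg (le_of_lt h10), Real.rpow_neg (le_of_lt hy0)] at h1
    rw [div_eq_mul_inv, div_eq_mul_inv]
    exact h1
  -- monotonicity on the left of x0
  have monoL : ∀ y, 0 ≤ y → y < x0 → a 0 / (x0:ℝ) ^ (K:ℝ) ≤ a y / (x0 - y) ^ (K:ℝ) := by
    intro y hy0 hy
    set G : ℝ → ℝ := fun z => a z * (x0 - z) ^ (-K:ℝ) with hGdef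
    have hD : ∀ z, 0 ≤ z → z < x0 →
        HasDerivAt G (deriv a z * (x0 - z) ^ (-K:ℝ)
          + a z * (-1 * (-K) * (x0 - z) ^ (-K - 1:ℝ))) z := by
      intro z hz0 hz1
      have hzpos : (0:ℝ) < x0 - z := sub_pos.mpr hz1
      have hda : HasDerivAt a (deriv a z) z :=
        (hdiff z ⟨hz0, by linarith⟩ (ne_of_lt hz1)).hasDerivAt
      have hpow : HasDerivAt (fun w => (x0 - w) ^ (-K:ℝ))
          (-1 * (-K) * (x0 - z) ^ (-K - 1:ℝ)) z :=
        ((hasDerivAt_id z).const_sub x0).rpow_const (Or.inl (ne_of_gt hzpos))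
      exact hda.mul hpow
    have hmon : MonotoneOn G (Set.Icc 0 y) := by
      apply monotoneOn_of_deriv_nonneg (convex_Icc 0 y)
      · intro z hz
        exact (hD z hz.1 (lt_of_le_of_lt hz.2 hy)).continuousAt.continuousWithinAt
      · rw [interior_Icc]
        intro z hz
        exact (hD z (le_of_lt hz.1) (lt_trans hz.2 hy)).differentiableAt.differentiableWithinAt
      · rw [interior_Icc]
        intro z hz
        have hz1 : z < x0 := lt_trans hz.2 hy
        have hzpos : (0:ℝ) < x0 - z := sub_pos.mpr hz1
        rw [(hD z (le_of_lt hz.1) hz1).deriv]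
        have hsplit : (x0 - z) ^ (-K:ℝ) = (x0 - z) * (x0 - z) ^ (-K - 1:ℝ) := by
          have h := Real.rpow_add hzpos 1 (-K - 1)
          rw [show (1:ℝ) + (-K - 1) = -K by ring, Real.rpow_one] at h
          exact h
        rw [hsplit]
        have hring : deriv a z * ((x0 - z) * (x0 - z) ^ (-K - 1:ℝ))
            + a z * (-1 * -K * (x0 - z) ^ (-K - 1:ℝ))
            = ((x0 - z) * deriv a z + K * a z) * (x0 - z) ^ (-K - 1:ℝ) := by ring
        rw [hring]
        have := hineq z ⟨le_of_lt hz.1, by linarith⟩ (ne_of_lt hz1)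
        exact mul_nonneg (by nlinarith) (Real.rpow_nonneg (le_of_lt hzpos) _)
    have h1 := hmon ⟨le_refl 0, hy0⟩ ⟨hy0, le_refl y⟩ hy0
    have hy0' : (0:ℝ) < x0 - y := sub_pos.mpr hy
    rw [hGdef] at h1
    simp only [sub_zero] at h1
    simp only [Real.rpow_neg (le_of_lt hx01), Real.rpow_neg (le_of_lt hy0')] at h1
    rw [div_eq_mul_inv, div_eq_mul_inv]
    exact h1
  intro x hx
  refine ⟨?_, ?_, ?_⟩
  · -- nonnegativity
    rcases le_total x0 x with h | h
    · apply intervalIntegral.integral_nonneg h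
      intro u hu
      apply div_nonneg (by linarith [hu.1])
      by_cases h' : u = x0
      · rw [h', ha00]
      · exact le_of_lt (hpos u ⟨by linarith [hu.1], le_trans hu.2 hx.2⟩ h')
    · rw [intervalIntegral.integral_symm x x0]
      rw [← intervalIntegral.integral_neg]
      apply intervalIntegral.integral_nonneg h
      intro u hu
      have : -((u - x0)/a u) = (x0 - u)/a u := by rw [← neg_div, neg_sub]
      rw [this]
      apply div_nonneg (by linarith [hu.2])
      by_cases h' : u = x0
      · rw [h', ha00]
      · exact le_of_lt (hpos u ⟨by linarith [hu.1, hx.1], by linarith [hu.2]⟩ h')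
  · -- right bound
    intro hxx
    set C1 : ℝ := (1 - x0) ^ (K:ℝ) / a 1 with hC1def
    have h10 : (0:ℝ) < 1 - x0 := by linarith
    have hC1 : 0 < C1 := div_pos (Real.rpow_pos_of_pos h10 K) ha1
    have pw : ∀ u ∈ Set.Icc x0 x, (u - x0)/a u ≤ C1 * (u - x0) ^ (1 - K:ℝ) := by
      intro u hu
      rcases eq_or_lt_of_le hu.1 with he | hlt
      · rw [← he, sub_self, ha00]
        simp only [zero_div]
        exact mul_nonneg (le_of_lt hC1) (Real.rpow_nonneg (le_refl 0) _)
      · have hu1 : u ≤ 1 := le_trans hu.2 hx.2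
        have hupos : (0:ℝ) < u - x0 := sub_pos.mpr hlt
        have hau : 0 < a u := hpos u ⟨by linarith, hu1⟩ (ne_of_gt hlt)
        have hKp1 : (0:ℝ) < (1 - x0) ^ (K:ℝ) := Real.rpow_pos_of_pos h10 K
        have hKp2 : (0:ℝ) < (u - x0) ^ (K:ℝ) := Real.rpow_pos_of_pos hupos K
        have h1 : a 1 * (u - x0) ^ (K:ℝ) ≤ a u * (1 - x0) ^ (K:ℝ) := by
          have := monoR u hlt hu1
          rw [div_le_div_iff₀ hKp1 hKp2] at this
          linarith
        rw [div_le_iff₀ hau]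
        have h2 : (u - x0) ^ (1 - K:ℝ) * (u - x0) ^ (K:ℝ) = u - x0 := by
          rw [← Real.rpow_add hupos, show (1 - K) + K = (1:ℝ) by ring, Real.rpow_one]
        have h3 : a 1 * (u - x0) ^ (K:ℝ) / (1 - x0) ^ (K:ℝ) ≤ a u :=
          (div_le_iff₀ hKp1).mpr h1
        have le1 : (u - x0) ^ (K:ℝ) ≤ (1 - x0) ^ (K:ℝ) * a u / a 1 := by
          rw [le_div_iff₀ ha1]
          calc (u - x0) ^ (K:ℝ) * a 1 = a 1 * (u - x0) ^ (K:ℝ) := mul_comm _ _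
            _ ≤ a u * (1 - x0) ^ (K:ℝ) := h1
            _ = (1 - x0) ^ (K:ℝ) * a u := mul_comm _ _
        calc u - x0 = (u - x0) ^ (1 - K:ℝ) * (u - x0) ^ (K:ℝ) := h2.symm
          _ ≤ (u - x0) ^ (1 - K:ℝ) * ((1 - x0) ^ (K:ℝ) * a u / a 1) :=
              mul_le_mul_of_nonneg_left le1 (Real.rpow_nonneg (le_of_lt hupos) _)
          _ = C1 * (u - x0) ^ (1 - K:ℝ) * a u := by rw [hC1def]; ring
    have hIntH : IntervalIntegrable (fun u => C1 * (u - x0) ^ (1 - K:ℝ)) volume x0 x := by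
      have h := (intervalIntegral.intervalIntegrable_rpow' (a := 0) (b := x - x0) hp).comp_sub_right x0
      simp only [zero_add, sub_add_cancel] at h
      exact h.const_mul C1
    have hIntG : IntervalIntegrable (fun u => (u - x0)/a u) volume x0 x := by
      rw [intervalIntegrable_iff_integrableOn_Ioc_of_le hxx]
      have hHi : IntegrableOn (fun u => C1 * (u - x0) ^ (1 - K:ℝ)) (Set.Ioc x0 x) :=
        (intervalIntegrable_iff_integrableOn_Ioc_of_le hxx).mp hIntH
      apply MeasureTheory.Integrable.mono hHi
      · apply ContinuousOn.aestronglyMeasurable _ measurableSet_Ioc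
        intro u hu
        have hau : 0 < a u :=
          hpos u ⟨by linarith [hu.1], le_trans hu.2 hx.2⟩ (ne_of_gt hu.1)
        exact ((continuousAt_id.sub continuousAt_const).div
          (hdiff u ⟨by linarith [hu.1], le_trans hu.2 hx.2⟩ (ne_of_gt hu.1)).continuousAt
          (ne_of_gt hau)).continuousWithinAt
      · filter_upwards [ae_restrict_mem measurableSet_Ioc] with u hu
        have hau : 0 < a u :=
          hpos u ⟨by linarith [hu.1], le_trans hu.2 hx.2⟩ (ne_of_gt hu.1)
        have h0 : 0 ≤ (u - x0)/a u := div_nonneg (by linarith [hu.1]) (le_of_lt hau)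
        have hb := pw u ⟨le_of_lt hu.1, hu.2⟩
        rw [Real.norm_eq_abs, Real.norm_eq_abs, abs_of_nonneg h0,
          abs_of_nonneg (le_trans h0 hb)]
        exact hb
    have hle := intervalIntegral.integral_mono_on hxx hIntG hIntH pw
    have hval : (∫ u in x0..x, C1 * (u - x0) ^ (1 - K:ℝ))
        = C1 * ((x - x0) ^ ((1 - K) + 1:ℝ) / ((1 - K) + 1)) := by
      rw [intervalIntegral.integral_const_mul]
      congr 1
      rw [intervalIntegral.integral_comp_sub_right (fun t => t ^ (1 - K:ℝ)) x0, sub_self,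
        integral_rpow (Or.inl hp), Real.zero_rpow (ne_of_gt hp1)]
      ring
    rw [hval] at hle
    refine le_trans hle ?_
    have h3 : (x - x0) ^ ((1 - K) + 1:ℝ) ≤ (1 - x0) ^ ((1 - K) + 1:ℝ) :=
      Real.rpow_le_rpow (by linarith) (by linarith [hx.2]) (le_of_lt hp1)
    have h4 : C1 * ((x - x0) ^ ((1 - K) + 1:ℝ) / ((1 - K) + 1))
        ≤ C1 * ((1 - x0) ^ ((1 - K) + 1:ℝ) / ((1 - K) + 1)) := by
      gcongr
    refine le_trans h4 (le_of_eq ?_)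
    have e1 : (1 - x0:ℝ) ^ (K:ℝ) * (1 - x0) ^ ((1 - K) + 1:ℝ) = (1 - x0) ^  2 := by
      rw [← Real.rpow_add h10, show K + ((1 - K) + 1) = (2:ℝ) by ring,
        show ((2:ℝ)) = ((2:ℕ):ℝ) by norm_num, Real.rpow_natCast]
    rw [hC1def, div_mul_div_comm, e1]
    rw [show a 1 * ((1 - K) + 1) = (2 - K) * a 1 by ring]
  · -- left bound
    intro hxx
    set C2 : ℝ := x0 ^ (K:ℝ) / a 0 with hC2def
    have hC2 : 0 < C2 := div_pos (Real.rpow_pos_of_pos hx01 K) ha0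
    have hflip : (∫ u in x0..x, (u - x0)/a u) = ∫ u in x..x0, (x0 - u)/a u := by
      rw [intervalIntegral.integral_symm x x0, ← intervalIntegral.integral_neg]
      have hfun : (fun u => -((u - x0)/a u)) = fun u => (x0 - u)/a u := by
        funext u; rw [← neg_div, neg_sub]
      rw [hfun]
    rw [hflip]
    have pw2 : ∀ u ∈ Set.Icc x x0, (x0 - u)/a u ≤ C2 * (x0 - u) ^ (1 - K:ℝ) := by
      intro u hu
      rcases eq_or_lt_of_le hu.2 with he | hlt
      · rw [he, sub_self, ha00]
        simp only [zero_div]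
        exact mul_nonneg (le_of_lt hC2) (Real.rpow_nonneg (le_refl 0) _)
      · have hu0 : (0:ℝ) ≤ u := le_trans hx.1 hu.1
        have hupos : (0:ℝ) < x0 - u := sub_pos.mpr hlt
        have hau : 0 < a u := hpos u ⟨hu0, by linarith⟩ (ne_of_lt hlt)
        have hKp1 : (0:ℝ) < (x0:ℝ) ^ (K:ℝ) := Real.rpow_pos_of_pos hx01 K
        have hKp2 : (0:ℝ) < (x0 - u) ^ (K:ℝ) := Real.rpow_pos_of_pos hupos K
        have h1 : a 0 * (x0 - u) ^ (K:ℝ) ≤ a u * (x0:ℝ) ^ (K:ℝ) := by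
          have := monoL u hu0 hlt
          rw [div_le_div_iff₀ hKp1 hKp2] at this
          linarith
        rw [div_le_iff₀ hau]
        have h2 : (x0 - u) ^ (1 - K:ℝ) * (x0 - u) ^ (K:ℝ) = x0 - u := by
          rw [← Real.rpow_add hupos, show (1 - K) + K = (1:ℝ) by ring, Real.rpow_one]
        have le1 : (x0 - u) ^ (K:ℝ) ≤ (x0:ℝ) ^ (K:ℝ) * a u / a 0 := by
          rw [le_div_iff₀ ha0]
          calc (x0 - u) ^ (K:ℝ) * a 0 = a 0 * (x0 - u) ^ (K:ℝ) := mul_comm _ _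
            _ ≤ a u * (x0:ℝ) ^ (K:ℝ) := h1
            _ = (x0:ℝ) ^ (K:ℝ) * a u := mul_comm _ _
        calc x0 - u = (x0 - u) ^ (1 - K:ℝ) * (x0 - u) ^ (K:ℝ) := h2.symm
          _ ≤ (x0 - u) ^ (1 - K:ℝ) * ((x0:ℝ) ^ (K:ℝ) * a u / a 0) :=
              mul_le_mul_of_nonneg_left le1 (Real.rpow_nonneg (le_of_lt hupos) _)
          _ = C2 * (x0 - u) ^ (1 - K:ℝ) * a u := by rw [hC2def]; ring
    have hIntH : IntervalIntegrable (fun u => C2 * (x0 - u) ^ (1 - K:ℝ)) volume x x0 := by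
      have h := (intervalIntegral.intervalIntegrable_rpow'
        (a := 0) (b := x0 - x) hp).comp_sub_left x0
      simp only [sub_zero, sub_sub_cancel] at h
      exact (h.symm).const_mul C2
    have hIntG : IntervalIntegrable (fun u => (x0 - u)/a u) volume x x0 := by
      rw [intervalIntegrable_iff_integrableOn_Ico_of_le hxx]
      have hHi : IntegrableOn (fun u => C2 * (x0 - u) ^ (1 - K:ℝ)) (Set.Ico x x0) :=
        (intervalIntegrable_iff_integrableOn_Ico_of_le hxx).mp hIntH
      apply MeasureTheory.Integrable.mono hHi
      · apply ContinuousOn.aestronglyMeasurable _ measurableSet_Ico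
        intro u hu
        have hu0 : (0:ℝ) ≤ u := le_trans hx.1 hu.1
        have hau : 0 < a u := hpos u ⟨hu0, by linarith [hu.2]⟩ (ne_of_lt hu.2)
        exact ((continuousAt_const.sub continuousAt_id).div
          (hdiff u ⟨hu0, by linarith [hu.2]⟩ (ne_of_lt hu.2)).continuousAt
          (ne_of_gt hau)).continuousWithinAt
      · filter_upwards [ae_restrict_mem measurableSet_Ico] with u hu
        have hu0 : (0:ℝ) ≤ u := le_trans hx.1 hu.1
        have hau : 0 < a u := hpos u ⟨hu0, by linarith [hu.2]⟩ (ne_of_lt hu.2)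
        have h0 : 0 ≤ (x0 - u)/a u := div_nonneg (by linarith [hu.2]) (le_of_lt hau)
        have hb := pw2 u ⟨hu.1, le_of_lt hu.2⟩
        rw [Real.norm_eq_abs, Real.norm_eq_abs, abs_of_nonneg h0,
          abs_of_nonneg (le_trans h0 hb)]
        exact hb
    have hle := intervalIntegral.integral_mono_on hxx hIntG hIntH pw2
    have hval : (∫ u in x..x0, C2 * (x0 - u) ^ (1 - K:ℝ))
        = C2 * ((x0 - x) ^ ((1 - K) + 1:ℝ) / ((1 - K) + 1)) := by
      rw [intervalIntegral.integral_const_mul]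
      congr 1
      rw [intervalIntegral.integral_comp_sub_left (fun t => t ^ (1 - K:ℝ)) x0, sub_self,
        integral_rpow (Or.inl hp), Real.zero_rpow (ne_of_gt hp1)]
      ring
    rw [hval] at hle
    refine le_trans hle ?_
    have h3 : (x0 - x) ^ ((1 - K) + 1:ℝ) ≤ (x0:ℝ) ^ ((1 - K) + 1:ℝ) :=
      Real.rpow_le_rpow (by linarith) (by linarith [hx.1]) (le_of_lt hp1)
    have h4 : C2 * ((x0 - x) ^ ((1 - K) + 1:ℝ) / ((1 - K) + 1))
        ≤ C2 * ((x0:ℝ) ^ ((1 - K) + 1:ℝ) / ((1 - K) + 1)) := by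
      gcongr
    refine le_trans h4 (le_of_eq ?_)
    have e1 : (x0:ℝ) ^ (K:ℝ) * (x0:ℝ) ^ ((1 - K) + 1:ℝ) = x0 ^ 2 := by
      rw [← Real.rpow_add hx01, show K + ((1 - K) + 1) = (2:ℝ) by ring,
        show ((2:ℝ)) = ((2:ℕ):ℝ) by norm_num, Real.rpow_natCast]
    rw [hC2def, div_mul_div_comm, e1]
    rw [show a 0 * ((1 - K) + 1) = (2 - K) * a 0 by ring]


/-- Bounds on the weight `ψ`: `-c1 c2 ≤ ψ < 0` on `[0,1]`, and for `x > x0` the sharper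
bound `ψ(x) ≤ c1[(1-x0)²/((2-K)a(1)) - c2] < 0`. -/
theorem psi_bounds (a : ℝ → ℝ) (x0 K c1 c2 : ℝ)
    (ha : WeaklyDegenerate a x0 K ∨ StronglyDegenerate a x0 K)
    (hc1 : 0 < c1)
    (hc2 : c2 > max ((1 - x0) ^ 2 / ((2 - K) * a 1)) (x0 ^ 2 / ((2 - K) * a 0))) :
    (∀ x ∈ Set.Icc (0:ℝ) 1, -(c1 * c2) ≤ psiC a x0 c1 c2 x ∧ psiC a x0 c1 c2 x < 0) ∧
    (∀ x ∈ Set.Icc (0:ℝ) 1, x0 < x →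
      psiC a x0 c1 c2 x ≤ c1 * ((1 - x0) ^ 2 / ((2 - K) * a 1) - c2) ∧
      c1 * ((1 - x0) ^ 2 / ((2 - K) * a 1) - c2) < 0) := by
  have hbase : (0 < x0 ∧ x0 < 1) ∧ a x0 = 0 ∧
      (∀ x ∈ Set.Icc (0:ℝ) 1, x ≠ x0 → 0 < a x) ∧
      (∀ x ∈ Set.Icc (0:ℝ) 1, x ≠ x0 → DifferentiableAt ℝ a x) ∧
      (0 < K ∧ K < 2) ∧
      (∀ x ∈ Set.Icc (0:ℝ) 1, x ≠ x0 → (x - x0) * deriv a x ≤ K * a x) := by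
    rcases ha with h | h
    · exact ⟨⟨h.x0_mem.1, h.x0_mem.2⟩, h.a_zero, h.a_pos, h.a_diff,
        ⟨h.K_mem.1, by linarith [h.K_mem.2]⟩, h.ineq⟩
    · exact ⟨⟨h.x0_mem.1, h.x0_mem.2⟩, h.a_zero, h.a_pos, h.a_diff,
        ⟨by linarith [h.K_mem.1], h.K_mem.2⟩, h.ineq⟩
  obtain ⟨⟨hx01, hx02⟩, ha0, hpos, hdiff, ⟨hK0, hK2⟩, hineq⟩ := hbase
  have haux := psi_int_aux a x0 K hx01 hx02 ha0 hpos hdiff hK0 hK2 hineq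
  have hc2B1 : (1 - x0)^2/((2-K)*a 1) < c2 := lt_of_le_of_lt (le_max_left _ _) hc2
  have hc2B2 : x0^2/((2-K)*a 0) < c2 := lt_of_le_of_lt (le_max_right _ _) hc2
  constructor
  · intro x hx
    obtain ⟨h0, hr, hl⟩ := haux x hx
    have hIlt : (∫ y in x0..x, (y - x0)/a y) < c2 := by
      rcases le_total x0 x with h | h
      · exact lt_of_le_of_lt (hr h) hc2B1
      · exact lt_of_le_of_lt (hl h) hc2B2
    constructor
    · simp only [psiC]
      nlinarith [mul_nonneg (le_of_lt hc1) h0]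
    · simp only [psiC]
      exact mul_neg_of_pos_of_neg hc1 (by linarith)
  · intro x hx hxx
    obtain ⟨h0, hr, hl⟩ := haux x hx
    refine ⟨?_, mul_neg_of_pos_of_neg hc1 (by linarith)⟩
    simp only [psiC]
    exact mul_le_mul_of_nonneg_left (by linarith [hr (le_of_lt hxx)]) (le_of_lt hc1)
end
end
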